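/- arXiv:1410.3247 — 9 statements merged into one kernel-verified Lean document; each statement's English description precedes it below -/
import Mathlib

section
/- Let P be a finite poset and n a positive integer. Then P admits an n-Grundy coloring if and only if there exists a linear presentation order ≺ on the vertices of P such that the First-Fit algorithm applied to P in order ≺ uses exactly n chains, i.e., χ_FF(P^≺) = n. -/
/-- `S` is an antichain with respect to the order relation `le`. -/
def IsAntichainOn {α : Type*} (le : α → α → Prop) (S : Finset α) : Prop :=
  ∀ a ∈ S, ∀ b ∈ S, a ≠ b → ¬ le a b ∧ ¬ le b a

/-- The poset `(α, le)` has width `w`: there is an antichain of size `w`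
and every antichain has size at most `w`. -/
def IsWidth {α : Type*} (le : α → α → Prop) (w : ℕ) : Prop :=
  (∃ S : Finset α, IsAntichainOn le S ∧ S.card = w) ∧
    ∀ S : Finset α, IsAntichainOn le S → S.card ≤ w

/-- `g` is an `n`-Grundy coloring of the poset `(α, le)`:
`g` takes values in `{1,…,n}`, is surjective onto `{1,…,n}`,
each color class is a chain (G1), and each vertex of color `j`
has an incomparable witness of every smaller color (G3). -/
def IsGrundy {α : Type*} (le : α → α → Prop) (n : ℕ) (g : α → ℕ) : Prop :=
  (∀ v, 1 ≤ g v ∧ g v ≤ n) ∧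
  (∀ i, 1 ≤ i → i ≤ n → ∃ v, g v = i) ∧
  (∀ u v, g u = g v → le u v ∨ le v u) ∧
  (∀ v i, 1 ≤ i → i < g v → ∃ u, (¬ le u v ∧ ¬ le v u) ∧ g u = i)

/-- `c` is the First-Fit chain partition of the poset `(α, le)` presented in the
strict total order `prec`: every vertex `v` gets the least color `c v ≥ 1` such
that all `prec`-earlier vertices of the same color are comparable to `v`. -/
def IsFFColoring {α : Type*} (le prec : α → α → Prop) (c : α → ℕ) : Prop :=
  ∀ v, 1 ≤ c v ∧
    (∀ u, prec u v → c u = c v → le u v ∨ le v u) ∧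
    (∀ j, 1 ≤ j → j < c v → ∃ u, prec u v ∧ c u = j ∧ ¬ le u v ∧ ¬ le v u)

/-- The sequences `x` (lower leg) and `y` (upper leg) form an induced copy of
the `m`-ladder `L_m` in the poset `(α, le)`. -/
def IsLadderIn {α : Type*} (le : α → α → Prop) {m : ℕ} (x y : Fin m → α) : Prop :=
  (∀ i j : Fin m, i < j → le (x i) (x j) ∧ x i ≠ x j) ∧
  (∀ i j : Fin m, i < j → le (y i) (y j) ∧ y i ≠ y j) ∧
  (∀ i : Fin m, le (x i) (y i) ∧ x i ≠ y i) ∧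
  (∀ i j : Fin m, i < j → ¬ le (y i) (x j) ∧ ¬ le (x j) (y i))

/-- The poset `(α, le)` contains no induced copy of the `m`-ladder `L_m`. -/
def LFree {α : Type*} (le : α → α → Prop) (m : ℕ) : Prop :=
  ¬ ∃ x y : Fin m → α, IsLadderIn le x y

/-- `A ⊑ B`: every element of `A` is `le`-below some element of `B`. -/
def Below {α : Type*} (le : α → α → Prop) (A B : Finset α) : Prop :=
  ∀ a ∈ A, ∃ b ∈ B, le a b

/-- `A ⊏ B`: `A ⊑ B` and `A ≠ B`. -/
def StrictBelow {α : Type*} (le : α → α → Prop) (A B : Finset α) : Prop :=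
  Below le A B ∧ A ≠ B

/-- The bipartite poset induced by antichains `A` and `B` (with `A` below `B`)
is a core: `|A| = |B|` and every comparable pair `x ≤ y` with `x ∈ A`, `y ∈ B`
is a Dilworth edge, i.e. belongs to a perfect matching of comparable pairs. -/
def IsCore {α : Type*} (le : α → α → Prop) (A B : Finset α) : Prop :=
  A.card = B.card ∧
    ∀ x ∈ A, ∀ y ∈ B, le x y →
      ∃ f : α → α, Set.BijOn f ↑A ↑B ∧ (∀ a ∈ A, le a (f a)) ∧ f x = y

/-- `A j = A_{s(i)}`: among the antichains presented before `A i`, it is the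
`⊑`-least one strictly above `A i`. -/
def IsSuccIdx {α : Type*} (le : α → α → Prop) {n : ℕ} (A : Fin n → Finset α)
    (i j : Fin n) : Prop :=
  j < i ∧ StrictBelow le (A i) (A j) ∧
    ∀ k : Fin n, k < i → StrictBelow le (A i) (A k) → Below le (A j) (A k)

/-- `A j = A_{p(i)}`: among the antichains presented before `A i`, it is the
`⊑`-greatest one strictly below `A i`. -/
def IsPredIdx {α : Type*} (le : α → α → Prop) {n : ℕ} (A : Fin n → Finset α)
    (i j : Fin n) : Prop :=
  j < i ∧ StrictBelow le (A j) (A i) ∧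
    ∀ k : Fin n, k < i → StrictBelow le (A k) (A i) → Below le (A k) (A j)

/-- `(P, A_1, …, A_n)` is a regular poset of width `w`: the `A i` are pairwise
disjoint maximum antichains (each of size `w`, the width of `P`) covering `P`,
linearly ordered by `⊑`; consecutive-at-presentation-time pairs induce cores
(R4); and every comparability with an earlier antichain factors through the
`⊑`-neighbors at presentation time (R5). -/
def IsRegularPoset {α : Type*} (le : α → α → Prop) (w : ℕ) {n : ℕ}
    (A : Fin n → Finset α) : Prop :=
  (∀ v : α, ∃ i, v ∈ A i) ∧
  (∀ i j : Fin n, i ≠ j → ∀ v ∈ A i, v ∉ A j) ∧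
  (∀ i, IsAntichainOn le (A i)) ∧
  (∀ i, (A i).card = w) ∧
  IsWidth le w ∧
  (∀ i j : Fin n, Below le (A i) (A j) ∨ Below le (A j) (A i)) ∧
  (∀ i j : Fin n, IsSuccIdx le A i j → IsCore le (A i) (A j)) ∧
  (∀ i j : Fin n, IsPredIdx le A i j → IsCore le (A j) (A i)) ∧
  (∀ (i j : Fin n) (x y : α), x ∈ A i → y ∈ A j → le x y → x ≠ y →
    (j < i → ∃ k, IsSuccIdx le A i k ∧ ∃ z ∈ A k, le x z ∧ x ≠ z ∧ le z y) ∧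
    (i < j → ∃ k, IsPredIdx le A j k ∧ ∃ z ∈ A k, le x z ∧ le z y ∧ z ≠ y))

/-- `x` is an ascending chain: increasing both in the poset and in color. -/
def IsAscending {α : Type*} (le : α → α → Prop) (g : α → ℕ) {k : ℕ}
    (x : Fin k → α) : Prop :=
  ∀ i j : Fin k, i < j → (le (x i) (x j) ∧ x i ≠ x j) ∧ g (x i) < g (x j)

/-- `x` is a descending chain: decreasing in the poset, increasing in color. -/
def IsDescending {α : Type*} (le : α → α → Prop) (g : α → ℕ) {k : ℕ}
    (x : Fin k → α) : Prop :=
  ∀ i j : Fin k, i < j → (le (x j) (x i) ∧ x i ≠ x j) ∧ g (x i) < g (x j)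

/-- The order of the lexicographic product `P · Q`. -/
def LexLe {α β : Type*} (leP : α → α → Prop) (leQ : β → β → Prop) :
    α × β → α × β → Prop :=
  fun a b => (leP a.1 b.1 ∧ a.1 ≠ b.1) ∨ (a.1 = b.1 ∧ leQ a.2 b.2)
/-- A finite poset has an `n`-Grundy coloring iff there is a
presentation order on which First-Fit uses exactly `n` chains. -/
theorem stmt_1 {α : Type} [Fintype α] (le : α → α → Prop)
    (hle : IsPartialOrder α le) (n : ℕ) (hn : 0 < n) :
    (∃ g : α → ℕ, IsGrundy le n g) ↔
      ∃ (prec : α → α → Prop) (c : α → ℕ),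
        IsStrictTotalOrder α prec ∧ IsFFColoring le prec c ∧
        (Finset.univ.image c).card = n := by
  classical
  constructor
  · rintro ⟨g, hb, hsurj, hchain, hG3⟩
    let e := Fintype.equivFin α
    refine ⟨fun u v => g u < g v ∨ (g u = g v ∧ e u < e v), g, ?_, ?_, ?_⟩
    · refine { trichotomous := ?_, irrefl := ?_, trans := ?_ }
      · intro a b hab hba
        rcases lt_trichotomy (g a) (g b) with h | h | h
        · exact absurd (Or.inl h) hab
        · rcases lt_trichotomy (e a) (e b) with h2 | h2 | h2
          · exact absurd (Or.inr ⟨h, h2⟩) hab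
          · exact e.injective h2
          · exact absurd (Or.inr ⟨h.symm, h2⟩) hba
        · exact absurd (Or.inl h) hba
      · rintro a (h | ⟨_, h⟩) <;> exact lt_irrefl _ h
      · rintro a b c (h1 | ⟨h1, h1'⟩) (h2 | ⟨h2, h2'⟩)
        · exact Or.inl (h1.trans h2)
        · exact Or.inl (h2 ▸ h1)
        · exact Or.inl (h1 ▸ h2)
        · exact Or.inr ⟨h1.trans h2, h1'.trans h2'⟩
    · intro v
      refine ⟨(hb v).1, fun u _ huv => hchain u v huv, fun j h1 h2 => ?_⟩
      obtain ⟨u, hinc, hu⟩ := hG3 v j h1 h2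
      exact ⟨u, Or.inl (by omega), hu, hinc⟩
    · have : Finset.univ.image g = Finset.Icc 1 n := by
        apply Finset.Subset.antisymm
        · intro j hj
          obtain ⟨v, _, rfl⟩ := Finset.mem_image.mp hj
          simpa [Finset.mem_Icc] using hb v
        · intro j hj
          simp only [Finset.mem_Icc] at hj
          obtain ⟨v, hv⟩ := hsurj j hj.1 hj.2
          exact Finset.mem_image.mpr ⟨v, Finset.mem_univ v, hv⟩
      rw [this, Nat.card_Icc]; omega
  · rintro ⟨prec, c, hsto, hff, hcard⟩
    set S := Finset.univ.image c with hSdef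
    have hmem : ∀ v, c v ∈ S := fun v => Finset.mem_image_of_mem c (Finset.mem_univ v)
    have hdc : ∀ j ∈ S, ∀ i, 1 ≤ i → i < j → i ∈ S := by
      intro j hj i h1 h2
      obtain ⟨v, _, rfl⟩ := Finset.mem_image.mp hj
      obtain ⟨u, _, hcu, _⟩ := (hff v).2.2 i h1 h2
      exact hcu ▸ hmem u
    have hpos : ∀ j ∈ S, 1 ≤ j := by
      intro j hj
      obtain ⟨v, _, rfl⟩ := Finset.mem_image.mp hj
      exact (hff v).1
    have hle_n : ∀ j ∈ S, j ≤ n := by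
      intro j hj
      by_contra h
      have hsub : Finset.Icc 1 j ⊆ S := by
        intro i hi
        simp only [Finset.mem_Icc] at hi
        rcases eq_or_lt_of_le hi.2 with rfl | hlt
        · exact hj
        · exact hdc j hj i hi.1 hlt
      have := Finset.card_le_card hsub
      rw [Nat.card_Icc] at this
      omega
    have hSeq : S = Finset.Icc 1 n := by
      apply Finset.eq_of_subset_of_card_le
      · intro j hj
        simp only [Finset.mem_Icc]
        exact ⟨hpos j hj, hle_n j hj⟩
      · rw [Nat.card_Icc, hcard]
        omega
    refine ⟨c, fun v => ⟨(hff v).1, hle_n _ (hmem v)⟩, ?_, ?_, ?_⟩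
    · intro i h1 h2
      have : i ∈ S := by rw [hSeq]; simp [Finset.mem_Icc]; omega
      obtain ⟨v, _, hv⟩ := Finset.mem_image.mp this
      exact ⟨v, hv⟩
    · intro u v huv
      rcases (by have := hsto.trichotomous u v; tauto : prec u v ∨ u = v ∨ prec v u) with h | h | h
      · exact (hff v).2.1 u h huv
      · exact Or.inl (h ▸ hle.refl u)
      · exact ((hff u).2.1 v h huv.symm).symm
    · intro v i h1 h2
      obtain ⟨u, _, hcu, hinc⟩ := (hff v).2.2 i h1 h2
      exact ⟨u, hinc, hcu⟩
end

section
/- Let (P, A_1,…,A_n) be a regular poset of width w. Then for all indices r, s ∈ {1,…,n} with A_r ⊏ A_s (i.e., A_r ⊑ A_s and A_r ≠ A_s), the bipartite subposet of P induced by A_r ∪ A_s is a core. -/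
lemma below_trans' {α : Type} (le : α → α → Prop) (hle : IsPartialOrder α le)
    {A B C : Finset α} (h1 : Below le A B) (h2 : Below le B C) : Below le A C := by
  intro a ha
  obtain ⟨b, hb, hab⟩ := h1 a ha
  obtain ⟨c, hc, hbc⟩ := h2 b hb
  exact ⟨c, hc, hle.trans _ _ _ hab hbc⟩

lemma below_antisymm' {α : Type} (le : α → α → Prop) (hle : IsPartialOrder α le)
    {A B : Finset α} (hA : IsAntichainOn le A) (hB : IsAntichainOn le B)
    (h1 : Below le A B) (h2 : Below le B A) : A = B := by
  have key : ∀ (S T : Finset α), IsAntichainOn le S → Below le S T → Below le T S →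
      S ⊆ T := by
    intro S T hS hST hTS a ha
    obtain ⟨b, hb, hab⟩ := hST a ha
    obtain ⟨a', ha', hba'⟩ := hTS b hb
    have haa' : le a a' := hle.trans _ _ _ hab hba'
    have : a = a' := by
      by_contra hne
      exact (hS a ha a' ha' hne).1 haa'
    subst this
    have : a = b := hle.antisymm _ _ hab hba'
    exact this ▸ hb
  exact Finset.Subset.antisymm (key A B hA h1 h2) (key B A hB h2 h1)

lemma pair_strictBelow' {α : Type} (le : α → α → Prop) (hle : IsPartialOrder α le)
    {n : ℕ} {A : Fin n → Finset α}
    (hdisj : ∀ i j : Fin n, i ≠ j → ∀ v ∈ A i, v ∉ A j)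
    (hanti : ∀ i, IsAntichainOn le (A i))
    (hlin : ∀ i j : Fin n, Below le (A i) (A j) ∨ Below le (A j) (A i))
    {i j : Fin n} {x y : α} (hx : x ∈ A i) (hy : y ∈ A j)
    (hxy : le x y) (hne : x ≠ y) : StrictBelow le (A i) (A j) := by
  have hij : i ≠ j := by
    intro h; subst h
    exact (hanti i x hx y hy hne).1 hxy
  have hAij : A i ≠ A j := by
    intro h
    exact hdisj j i hij.symm y hy (h ▸ hy)
  refine ⟨?_, hAij⟩
  rcases hlin i j with h | h
  · exact h
  · exfalso
    obtain ⟨x', hx', hyx'⟩ := h y hy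
    have hxx' : le x x' := hle.trans _ _ _ hxy hyx'
    have : x = x' := by
      by_contra hne'
      exact (hanti i x hx x' hx' hne').1 hxx'
    subst this
    exact hne (hle.antisymm _ _ hxy hyx')

/-- Number of antichains strictly `⊑`-between `A i` and `A j`. -/
noncomputable def btwCount {α : Type} (le : α → α → Prop) {n : ℕ}
    (A : Fin n → Finset α) (i j : Fin n) : ℕ :=
  {m : Fin n | StrictBelow le (A i) (A m) ∧ StrictBelow le (A m) (A j)}.ncard

lemma btwCount_lt_left {α : Type} (le : α → α → Prop) (hle : IsPartialOrder α le)
    {n : ℕ} {A : Fin n → Finset α} (hanti : ∀ i, IsAntichainOn le (A i))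
    {i j k : Fin n} (hik : StrictBelow le (A i) (A k))
    (hkj : StrictBelow le (A k) (A j)) :
    btwCount le A k j < btwCount le A i j := by
  apply Set.ncard_lt_ncard ?_ (Set.toFinite _)
  constructor
  · rintro m ⟨hkm, hmj⟩
    refine ⟨⟨below_trans' le hle hik.1 hkm.1, ?_⟩, hmj⟩
    intro h
    exact hik.2 (below_antisymm' le hle (hanti i) (hanti k) hik.1
      (by rw [h]; exact hkm.1))
  · intro hsub
    exact (hsub ⟨hik, hkj⟩).1.2 rfl

lemma btwCount_lt_right {α : Type} (le : α → α → Prop) (hle : IsPartialOrder α le)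
    {n : ℕ} {A : Fin n → Finset α} (hanti : ∀ i, IsAntichainOn le (A i))
    {i j k : Fin n} (hik : StrictBelow le (A i) (A k))
    (hkj : StrictBelow le (A k) (A j)) :
    btwCount le A i k < btwCount le A i j := by
  apply Set.ncard_lt_ncard ?_ (Set.toFinite _)
  constructor
  · rintro m ⟨him, hmk⟩
    refine ⟨him, below_trans' le hle hmk.1 hkj.1, ?_⟩
    intro h
    exact hkj.2 (below_antisymm' le hle (hanti k) (hanti j) hkj.1
      (by rw [← h]; exact hmk.1))
  · intro hsub
    exact (hsub ⟨hik, hkj⟩).2.2 rfl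

lemma core_step {α : Type} (le : α → α → Prop) (hle : IsPartialOrder α le)
    (w : ℕ) {n : ℕ} (A : Fin n → Finset α) (hreg : IsRegularPoset le w A)
    (N : ℕ) :
    ∀ i j : Fin n, ∀ x y : α, x ∈ A i → y ∈ A j → le x y → x ≠ y →
      btwCount le A i j < N →
      ∃ f : α → α, Set.BijOn f ↑(A i) ↑(A j) ∧ (∀ a ∈ A i, le a (f a)) ∧ f x = y := by
  obtain ⟨hcov, hdisj, hanti, hcard, hwidth, hlin, hsucc, hpred, hR5⟩ := hreg
  induction N using Nat.strong_induction_on with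
  | _ N ih =>
    intro i j x y hx hy hxy hne hN
    have hij : i ≠ j := by
      intro h; subst h
      exact (hanti i x hx y hy hne).1 hxy
    rcases lt_trichotomy i j with hlt | heq | hlt
    · -- pred case : i < j
      obtain ⟨k, hk, z, hz, hxz, hzy, hzney⟩ :=
        (hR5 i j x y hx hy hxy hne).2 hlt
      obtain ⟨f2, hbij2, hle2, hf2z⟩ := (hpred j k hk).2 z hz y hy hzy
      by_cases hxz' : x = z
      · have hik : i = k := by
          by_contra h
          exact hdisj i k h x hx (hxz' ▸ hz)
        subst hik
        exact ⟨f2, hbij2, hle2, by rw [hxz']; exact hf2z⟩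
      · have hAik : StrictBelow le (A i) (A k) :=
          pair_strictBelow' le hle hdisj hanti hlin hx hz hxz hxz'
        have hAkj : StrictBelow le (A k) (A j) := hk.2.1
        obtain ⟨f1, hbij1, hle1, hf1x⟩ :=
          ih (btwCount le A i j) hN i k x z hx hz hxz hxz'
            (btwCount_lt_right le hle hanti hAik hAkj)
        refine ⟨f2 ∘ f1, hbij2.comp hbij1, ?_, ?_⟩
        · intro a ha
          have hfa : f1 a ∈ A k := hbij1.mapsTo ha
          exact hle.trans _ _ _ (hle1 a ha) (hle2 (f1 a) hfa)
        · simp only [Function.comp_apply, hf1x, hf2z]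
    · exact absurd heq hij
    · -- succ case : j < i
      obtain ⟨k, hk, z, hz, hxz, hxnez, hzy⟩ :=
        (hR5 i j x y hx hy hxy hne).1 hlt
      obtain ⟨f1, hbij1, hle1, hf1x⟩ := (hsucc i k hk).2 x hx z hz hxz
      by_cases hzy' : z = y
      · have hkj : k = j := by
          by_contra h
          exact hdisj k j h z hz (hzy' ▸ hy)
        subst hkj
        exact ⟨f1, hbij1, hle1, by rw [hf1x, hzy']⟩
      · have hAik : StrictBelow le (A i) (A k) := hk.2.1
        have hAkj : StrictBelow le (A k) (A j) :=
          pair_strictBelow' le hle hdisj hanti hlin hz hy hzy hzy'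
        obtain ⟨f2, hbij2, hle2, hf2z⟩ :=
          ih (btwCount le A i j) hN k j z y hz hy hzy hzy'
            (btwCount_lt_left le hle hanti hAik hAkj)
        refine ⟨f2 ∘ f1, hbij2.comp hbij1, ?_, ?_⟩
        · intro a ha
          have hfa : f1 a ∈ A k := hbij1.mapsTo ha
          exact hle.trans _ _ _ (hle1 a ha) (hle2 (f1 a) hfa)
        · simp only [Function.comp_apply, hf1x, hf2z]

/-- In a regular poset, for any two maximum antichains
`A r ⊏ A s`, the bipartite subposet induced by `A r ∪ A s` is a core. -/
theorem stmt_2 {α : Type} [Fintype α] (le : α → α → Prop)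
    (hle : IsPartialOrder α le) (w : ℕ) {n : ℕ} (A : Fin n → Finset α)
    (hreg : IsRegularPoset le w A) (r s : Fin n)
    (hrs : StrictBelow le (A r) (A s)) :
    IsCore le (A r) (A s) := by
  constructor
  · rw [hreg.2.2.2.1 r, hreg.2.2.2.1 s]
  · intro x hx y hy hxy
    have hrsne : r ≠ s := fun h => hrs.2 (h ▸ rfl)
    have hne : x ≠ y := by
      intro h
      exact hreg.2.1 r s hrsne x hx (h ▸ hy)
    exact core_step le hle w A hreg (btwCount le A r s + 1) r s x y hx hy hxy hne
      (Nat.lt_succ_self _)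
end

section
/- Let (P, A_1,…,A_n) be a regular poset of width w and let r, s ∈ {1,…,n} satisfy A_r ⊏ A_s. Let t be an index with A_r ⊑ A_t ⊑ A_s such that either t ≤ u for every index u with A_t ⊑ A_u ⊑ A_s, or t ≤ u for every index u with A_r ⊑ A_u ⊑ A_t (i.e., A_t is the earliest presented antichain among those in the interval [A_t, A_s] or among those in [A_r, A_t]). Then for every x ∈ A_r and y ∈ A_s with x ≤ y there exists z ∈ A_t with x ≤ z ≤ y. -/
/-- In a regular poset, if `A r ⊏ A s`, `A r ⊑ A t ⊑ A s`, and
`A t` is the earliest presented antichain in the interval `[A t, A s]` or in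
`[A r, A t]`, then every comparability `x ≤ y` with `x ∈ A r`, `y ∈ A s`
factors through some `z ∈ A t`. -/
theorem stmt_3 {α : Type} [Fintype α] (le : α → α → Prop)
    (hle : IsPartialOrder α le) (w : ℕ) {n : ℕ} (A : Fin n → Finset α)
    (hreg : IsRegularPoset le w A) (r s t : Fin n)
    (hrs : StrictBelow le (A r) (A s))
    (hrt : Below le (A r) (A t)) (hts : Below le (A t) (A s))
    (hearliest :
      (∀ u : Fin n, Below le (A t) (A u) → Below le (A u) (A s) → t ≤ u) ∨
      (∀ u : Fin n, Below le (A r) (A u) → Below le (A u) (A t) → t ≤ u)) :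
    ∀ x ∈ A r, ∀ y ∈ A s, le x y → ∃ z ∈ A t, le x z ∧ le z y := by
  classical
  obtain ⟨hcov, hdisj, hanti, hcard, hwidth, hlin, hsc, hpc, hR5⟩ := hreg
  intro x hx y hy hxy
  have hrefl : ∀ a, le a a := hle.refl
  have htrans : ∀ {a b c : α}, le a b → le b c → le a c :=
    fun h1 h2 => hle.trans _ _ _ h1 h2
  have hantisymm : ∀ {a b : α}, le a b → le b a → a = b :=
    fun h1 h2 => hle.antisymm _ _ h1 h2
  have hchain : ∀ i : Fin n, ∀ a ∈ A i, ∀ b ∈ A i, le a b → a = b := by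
    intro i a ha b hb hab
    by_contra hne
    exact (hanti i a ha b hb hne).1 hab
  have hBrefl : ∀ i : Fin n, Below le (A i) (A i) := fun i a ha => ⟨a, ha, hrefl a⟩
  have hBtrans : ∀ {i j k : Fin n}, Below le (A i) (A j) → Below le (A j) (A k) →
      Below le (A i) (A k) := by
    intro i j k h1 h2 a ha
    obtain ⟨b, hb, hab⟩ := h1 a ha
    obtain ⟨c, hc, hbc⟩ := h2 b hb
    exact ⟨c, hc, htrans hab hbc⟩
  have hBsub : ∀ i j : Fin n, Below le (A i) (A j) → Below le (A j) (A i) → A i ⊆ A j := by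
    intro i j h1 h2 a ha
    obtain ⟨b, hb, hab⟩ := h1 a ha
    obtain ⟨a', ha', hba⟩ := h2 b hb
    have haa : a = a' := hchain i a ha a' ha' (htrans hab hba)
    have hba' : a = b := hantisymm hab (by rw [haa]; exact hba)
    exact hba' ▸ hb
  have hBanti : ∀ {i j : Fin n}, Below le (A i) (A j) → Below le (A j) (A i) → A i = A j :=
    fun h1 h2 => Finset.Subset.antisymm (hBsub _ _ h1 h2) (hBsub _ _ h2 h1)
  have hwpos : 0 < w := by
    have := Finset.card_pos.mpr ⟨x, hx⟩
    rwa [hcard r] at this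
  have hAne : ∀ i : Fin n, (A i).Nonempty := by
    intro i
    apply Finset.card_pos.mp
    rw [hcard i]; exact hwpos
  have hidx : ∀ {i j : Fin n}, A i = A j → i = j := by
    intro i j h
    by_contra hij
    obtain ⟨v, hv⟩ := hAne i
    exact hdisj i j hij v hv (h ▸ hv)
  have hMlt : ∀ b e b' e' : Fin n, Below le (A b) (A b') → Below le (A e') (A e) →
      ∀ u : Fin n, Below le (A b) (A u) → Below le (A u) (A e) →
      ¬ (Below le (A b') (A u) ∧ Below le (A u) (A e')) →
      (Finset.univ.filter fun v => Below le (A b') (A v) ∧ Below le (A v) (A e')).card <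
      (Finset.univ.filter fun v => Below le (A b) (A v) ∧ Below le (A v) (A e)).card := by
    intro b e b' e' hb he u hu1 hu2 hu3
    apply Finset.card_lt_card
    have hsub : (Finset.univ.filter fun v => Below le (A b') (A v) ∧ Below le (A v) (A e')) ⊆
        (Finset.univ.filter fun v => Below le (A b) (A v) ∧ Below le (A v) (A e)) := by
      intro v hv
      obtain ⟨-, hv1, hv2⟩ := Finset.mem_filter.mp hv
      exact Finset.mem_filter.mpr ⟨Finset.mem_univ v, hBtrans hb hv1, hBtrans hv2 he⟩
    rw [Finset.ssubset_iff_of_subset hsub]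
    exact ⟨u, Finset.mem_filter.mpr ⟨Finset.mem_univ u, hu1, hu2⟩,
      fun h => hu3 (Finset.mem_filter.mp h).2⟩
  rcases hearliest with he1 | he2
  · -- Case 1: t is the earliest index in the interval [A t, A s]
    have key : ∀ N : ℕ, ∀ b e : Fin n,
        (Finset.univ.filter fun u => Below le (A b) (A u) ∧ Below le (A u) (A e)).card ≤ N →
        Below le (A b) (A t) → Below le (A t) (A e) → Below le (A e) (A s) →
        ∀ x' ∈ A b, ∀ y' ∈ A e, le x' y' → ∃ z ∈ A t, le x' z ∧ le z y' := by
      intro N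
      induction N with
      | zero =>
        intro b e hM hbt hte hes
        exfalso
        have he : e ∈ Finset.univ.filter fun u => Below le (A b) (A u) ∧ Below le (A u) (A e) :=
          Finset.mem_filter.mpr ⟨Finset.mem_univ e, hBtrans hbt hte, hBrefl e⟩
        have := Finset.card_pos.mpr ⟨e, he⟩
        omega
      | succ N ih =>
        intro b e hM hbt hte hes x' hx' y' hy' hxy'
        by_cases hTB : A t = A b
        · exact ⟨x', hTB ▸ hx', hrefl x', hxy'⟩
        by_cases hTE : A t = A e
        · exact ⟨y', hTE ▸ hy', hxy', hrefl y'⟩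
        have hbe : b ≠ e := by
          intro h; subst h; exact hTB (hBanti hte hbt)
        have hxyne : x' ≠ y' := fun h => hdisj b e hbe x' hx' (h ▸ hy')
        obtain ⟨h1, h2⟩ := hR5 b e x' y' hx' hy' hxy' hxyne
        rcases lt_or_gt_of_ne hbe with hlt | hgt
        · -- b < e : go down from e via its pred m
          obtain ⟨m, ⟨hm1, hm2, hm3⟩, z, hz, hxz, hzy, -⟩ := h2 hlt
          have hts' : t < e :=
            lt_of_le_of_ne (he1 e hte hes) (fun h => hTE (by rw [h]))
          have hAtm : Below le (A t) (A m) := hm3 t hts' ⟨hte, hTE⟩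
          have hdec := hMlt b e b m (hBrefl b) hm2.1 e (hBtrans hbt hte) (hBrefl e)
            (fun h => hm2.2 (hBanti hm2.1 h.2))
          obtain ⟨z', hz', hxz', hzz'⟩ := ih b m (by omega) hbt hAtm
            (hBtrans hm2.1 hes) x' hx' z hz hxz
          exact ⟨z', hz', hxz', htrans hzz' hzy⟩
        · -- e < b : go up from b via its succ m
          obtain ⟨m, ⟨hm1, hm2, hm3⟩, z, hz, hxz, -, hzy⟩ := h1 hgt
          have hABne : A b ≠ A e := fun h => hbe (hidx h)
          have hme : Below le (A m) (A e) := hm3 e hgt ⟨hBtrans hbt hte, hABne⟩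
          rcases hlin m t with hmt | htm
          · have hdec := hMlt b e m e hm2.1 (hBrefl e) b (hBrefl b) (hBtrans hbt hte)
              (fun h => hm2.2 (hBanti hm2.1 h.1))
            obtain ⟨z', hz', hzz', hz'y⟩ := ih m e (by omega) hmt hte hes z hz y' hy' hzy
            exact ⟨z', hz', htrans hxz hzz', hz'y⟩
          · by_cases hTM : A t = A m
            · exact ⟨z, hTM ▸ hz, hxz, hzy⟩
            · exfalso
              have htb : t < b := lt_of_le_of_lt (he1 m htm (hBtrans hme hes)) hm1
              have hmt' : Below le (A m) (A t) := hm3 t htb ⟨hbt, fun h => hTB h.symm⟩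
              exact hTM (hBanti htm hmt')
    exact key _ r s le_rfl hrt hts (hBrefl s) x hx y hy hxy
  · -- Case 2: t is the earliest index in the interval [A r, A t]
    have key : ∀ N : ℕ, ∀ b e : Fin n,
        (Finset.univ.filter fun u => Below le (A b) (A u) ∧ Below le (A u) (A e)).card ≤ N →
        Below le (A r) (A b) → Below le (A b) (A t) → Below le (A t) (A e) →
        ∀ x' ∈ A b, ∀ y' ∈ A e, le x' y' → ∃ z ∈ A t, le x' z ∧ le z y' := by
      intro N
      induction N with
      | zero =>
        intro b e hM hrb hbt hte
        exfalso
        have he : e ∈ Finset.univ.filter fun u => Below le (A b) (A u) ∧ Below le (A u) (A e) :=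
          Finset.mem_filter.mpr ⟨Finset.mem_univ e, hBtrans hbt hte, hBrefl e⟩
        have := Finset.card_pos.mpr ⟨e, he⟩
        omega
      | succ N ih =>
        intro b e hM hrb hbt hte x' hx' y' hy' hxy'
        by_cases hTB : A t = A b
        · exact ⟨x', hTB ▸ hx', hrefl x', hxy'⟩
        by_cases hTE : A t = A e
        · exact ⟨y', hTE ▸ hy', hxy', hrefl y'⟩
        have hbe : b ≠ e := by
          intro h; subst h; exact hTB (hBanti hte hbt)
        have hxyne : x' ≠ y' := fun h => hdisj b e hbe x' hx' (h ▸ hy')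
        obtain ⟨h1, h2⟩ := hR5 b e x' y' hx' hy' hxy' hxyne
        rcases lt_or_gt_of_ne hbe with hlt | hgt
        · -- b < e : go down from e via its pred m
          obtain ⟨m, ⟨hm1, hm2, hm3⟩, z, hz, hxz, hzy, -⟩ := h2 hlt
          have hABne : A b ≠ A e := fun h => hbe (hidx h)
          have hbm : Below le (A b) (A m) := hm3 b hlt ⟨hBtrans hbt hte, hABne⟩
          rcases hlin t m with htm | hmt
          · have hdec := hMlt b e b m (hBrefl b) hm2.1 e (hBtrans hbt hte) (hBrefl e)
              (fun h => hm2.2 (hBanti hm2.1 h.2))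
            obtain ⟨z', hz', hxz', hzz'⟩ := ih b m (by omega) hrb hbt htm x' hx' z hz hxz
            exact ⟨z', hz', hxz', htrans hzz' hzy⟩
          · by_cases hTM : A t = A m
            · exact ⟨z, hTM ▸ hz, hxz, hzy⟩
            · exfalso
              have hte' : t < e := lt_of_le_of_lt (he2 m (hBtrans hrb hbm) hmt) hm1
              have htm' : Below le (A t) (A m) := hm3 t hte' ⟨hte, hTE⟩
              exact hTM (hBanti htm' hmt)
        · -- e < b : go up from b via its succ m
          obtain ⟨m, ⟨hm1, hm2, hm3⟩, z, hz, hxz, -, hzy⟩ := h1 hgt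
          have htb : t < b :=
            lt_of_le_of_ne (he2 b hrb hbt) (fun h => hTB (by rw [h]))
          have hmt : Below le (A m) (A t) := hm3 t htb ⟨hbt, fun h => hTB h.symm⟩
          have hdec := hMlt b e m e hm2.1 (hBrefl e) b (hBrefl b) (hBtrans hbt hte)
            (fun h => hm2.2 (hBanti hm2.1 h.1))
          obtain ⟨z', hz', hzz', hz'y⟩ := ih m e (by omega) (hBtrans hrb hm2.1) hmt hte
            z hz y' hy' hzy
          exact ⟨z', hz', htrans hxz hzz', hz'y⟩
    exact key _ r s le_rfl (hBrefl r) hrt hts x hx y hy hxy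
end

section
/- Let (P, A_1,…,A_n) be a regular poset of width w and suppose L ⊆ P induces a canonical m-ladder with lower leg x_1,…,x_m and upper leg y_1,…,y_m. Then for every i ∈ {1,…,m}, the set of elements of A(y_i) that are ≥ y_1 has size at least i, i.e., |U_P[y_1] ∩ A(y_i)| ≥ i. -/
open Classical in
/-- In a regular poset, for any two antichains `A c ⊑ A d` and any comparable pair
`u ∈ A c`, `v ∈ A d` with `u ≤ v`, there is a monotone bijection `A c → A d`
sending `u` to `v` (obtained by composing core matchings along the factoring
given by R5). -/
private lemma stmt4_pinned {α : Type} (le : α → α → Prop)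
    (hle : IsPartialOrder α le) (w : ℕ) {n : ℕ} (A : Fin n → Finset α)
    (hreg : IsRegularPoset le w A) :
    ∀ N : ℕ, ∀ c d : Fin n, ∀ u v : α,
      (Finset.univ.filter
        (fun k => Below le (A c) (A k) ∧ StrictBelow le (A k) (A d))).card ≤ N →
      u ∈ A c → v ∈ A d → le u v → Below le (A c) (A d) →
      ∃ f : α → α, Set.BijOn f (A c) (A d) ∧ (∀ a ∈ A c, le a (f a)) ∧ f u = v := by
  obtain ⟨hcov, hdisj, hchain, hcards, hwidth, htot, hsuccC, hpredC, hR5⟩ := hreg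
  have hrefl : ∀ a : α, le a a := hle.refl
  have htr : ∀ a b c : α, le a b → le b c → le a c := fun a b c => hle.trans a b c
  have hasym : ∀ a b : α, le a b → le b a → a = b := fun a b => hle.antisymm a b
  have btrans : ∀ {S T U : Finset α}, Below le S T → Below le T U → Below le S U := by
    intro S T U h1 h2 a ha
    obtain ⟨b, hb, hab⟩ := h1 a ha
    obtain ⟨c', hc', hbc⟩ := h2 b hb
    exact ⟨c', hc', htr _ _ _ hab hbc⟩
  have bsub : ∀ i j : Fin n, Below le (A i) (A j) → Below le (A j) (A i) → A i ⊆ A j := by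
    intro i j h1 h2 a ha
    obtain ⟨b, hb, hab⟩ := h1 a ha
    obtain ⟨a', ha', hba⟩ := h2 b hb
    have haa : a = a' := by
      by_contra hne
      exact (hchain i a ha a' ha' hne).1 (htr _ _ _ hab hba)
    have hab2 : a = b := hasym a b hab (haa ▸ hba)
    exact hab2 ▸ hb
  have banti : ∀ i j : Fin n, Below le (A i) (A j) → Below le (A j) (A i) → A i = A j :=
    fun i j h1 h2 => Finset.Subset.antisymm (bsub i j h1 h2) (bsub j i h2 h1)
  intro N
  induction N with
  | zero =>
    intro c d u v hcard hu hv huv hcd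
    by_cases hEq : c = d
    · subst hEq
      have huv' : u = v := by
        by_contra hne
        exact (hchain c u hu v hv hne).1 huv
      exact ⟨id, Set.bijOn_id _, fun a _ => hrefl a, huv'⟩
    · exfalso
      have hmem : c ∈ Finset.univ.filter
          (fun k => Below le (A c) (A k) ∧ StrictBelow le (A k) (A d)) := by
        refine Finset.mem_filter.2 ⟨Finset.mem_univ _, fun a ha => ⟨a, ha, hrefl a⟩,
          hcd, fun hAcd => hdisj c d hEq u hu (hAcd ▸ hu)⟩
      have := Finset.card_pos.2 ⟨c, hmem⟩
      omega
  | succ N ih =>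
    intro c d u v hcard hu hv huv hcd
    by_cases hEq : c = d
    · subst hEq
      have huv' : u = v := by
        by_contra hne
        exact (hchain c u hu v hv hne).1 huv
      exact ⟨id, Set.bijOn_id _, fun a _ => hrefl a, huv'⟩
    · have hAne : A c ≠ A d := fun hAcd => hdisj c d hEq u hu (hAcd ▸ hu)
      have hstrict : StrictBelow le (A c) (A d) := ⟨hcd, hAne⟩
      have hune : u ≠ v := by
        intro h; subst h
        exact hdisj c d hEq u hu hv
      rcases lt_trichotomy c d with hlt | heq | hgt
      · -- c < d : pred branch
        obtain ⟨k, hkpred, z, hz, huz, hzv, hzne⟩ :=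
          (hR5 c d u v hu hv huv hune).2 hlt
        have hck : Below le (A c) (A k) := hkpred.2.2 c hlt hstrict
        obtain ⟨f2, hbij2, hmono2, hpin2⟩ := (hpredC d k hkpred).2 z hz v hv hzv
        have hsubM : (Finset.univ.filter
            (fun k' => Below le (A c) (A k') ∧ StrictBelow le (A k') (A k))) ⊆
            (Finset.univ.filter
            (fun k' => Below le (A c) (A k') ∧ StrictBelow le (A k') (A d))) := by
          intro k' hk'
          obtain ⟨-, h1, h2⟩ := Finset.mem_filter.1 hk'
          refine Finset.mem_filter.2 ⟨Finset.mem_univ _, h1,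
            btrans h2.1 hkpred.2.1.1, fun hEq2 => ?_⟩
          exact hkpred.2.1.2 (banti k d hkpred.2.1.1 (hEq2 ▸ h2.1))
        have hkmem : k ∈ Finset.univ.filter
            (fun k' => Below le (A c) (A k') ∧ StrictBelow le (A k') (A d)) :=
          Finset.mem_filter.2 ⟨Finset.mem_univ _, hck, hkpred.2.1⟩
        have hknot : k ∉ Finset.univ.filter
            (fun k' => Below le (A c) (A k') ∧ StrictBelow le (A k') (A k)) := by
          intro hmem
          exact ((Finset.mem_filter.1 hmem).2.2).2 rfl
        have hlt' := Finset.card_lt_card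
          ((Finset.ssubset_iff_of_subset hsubM).2 ⟨k, hkmem, hknot⟩)
        obtain ⟨f1, hbij1, hmono1, hpin1⟩ :=
          ih c k u z (by omega) hu hz huz hck
        refine ⟨f2 ∘ f1, hbij2.comp hbij1, fun a ha => ?_, ?_⟩
        · exact htr _ _ _ (hmono1 a ha) (hmono2 (f1 a) (hbij1.mapsTo ha))
        · show f2 (f1 u) = v
          rw [hpin1, hpin2]
      · exact absurd heq hEq
      · -- d < c : succ branch
        obtain ⟨k, hksucc, z, hz, huz, huzne, hzv⟩ :=
          (hR5 c d u v hu hv huv hune).1 hgt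
        have hkd : Below le (A k) (A d) := hksucc.2.2 d hgt hstrict
        obtain ⟨f1, hbij1, hmono1, hpin1⟩ := (hsuccC c k hksucc).2 u hu z hz huz
        have hsubM : (Finset.univ.filter
            (fun k' => Below le (A k) (A k') ∧ StrictBelow le (A k') (A d))) ⊆
            (Finset.univ.filter
            (fun k' => Below le (A c) (A k') ∧ StrictBelow le (A k') (A d))) := by
          intro k' hk'
          obtain ⟨-, h1, h2⟩ := Finset.mem_filter.1 hk'
          exact Finset.mem_filter.2 ⟨Finset.mem_univ _,
            btrans hksucc.2.1.1 h1, h2⟩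
        have hcmem : c ∈ Finset.univ.filter
            (fun k' => Below le (A c) (A k') ∧ StrictBelow le (A k') (A d)) :=
          Finset.mem_filter.2 ⟨Finset.mem_univ _, fun a ha => ⟨a, ha, hrefl a⟩, hstrict⟩
        have hcnot : c ∉ Finset.univ.filter
            (fun k' => Below le (A k) (A k') ∧ StrictBelow le (A k') (A d)) := by
          intro hmem
          obtain ⟨-, h1, -⟩ := Finset.mem_filter.1 hmem
          exact hksucc.2.1.2 (banti c k hksucc.2.1.1 h1)
        have hlt' := Finset.card_lt_card
          ((Finset.ssubset_iff_of_subset hsubM).2 ⟨c, hcmem, hcnot⟩)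
        obtain ⟨f2, hbij2, hmono2, hpin2⟩ :=
          ih k d z v (by omega) hz hv hzv hkd
        refine ⟨f2 ∘ f1, hbij2.comp hbij1, fun a ha => ?_, ?_⟩
        · exact htr _ _ _ (hmono1 a ha) (hmono2 (f1 a) (hbij1.mapsTo ha))
        · show f2 (f1 u) = v
          rw [hpin1, hpin2]

/-- If `L` induces a canonical `m`-ladder in a regular poset with
lower leg `x` and upper leg `y`, then for every `i`, the set of elements of
the antichain containing `y i` that are above `y 1` has at least `i` elements
(1-indexed; `(i : ℕ) + 1` in 0-indexing). -/
theorem stmt_4 {α : Type} [Fintype α] (le : α → α → Prop)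
    (hle : IsPartialOrder α le) (w : ℕ) {n : ℕ} (A : Fin n → Finset α)
    (hreg : IsRegularPoset le w A) {m : ℕ} (hm : 0 < m)
    (x y : Fin m → α) (hlad : IsLadderIn le x y)
    (hcan : ∀ i j : Fin m, (i : ℕ) + 1 = (j : ℕ) →
      ∀ a b : Fin n, y i ∈ A a → x j ∈ A b → Below le (A a) (A b)) :
    ∀ (i : Fin m) (a : Fin n), y i ∈ A a →
      (i : ℕ) + 1 ≤ {z : α | z ∈ A a ∧ le (y ⟨0, hm⟩) z}.ncard := by
  classical
  have hrefl : ∀ a : α, le a a := hle.refl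
  have htr : ∀ a b c : α, le a b → le b c → le a c := fun a b c => hle.trans a b c
  have hasym : ∀ a b : α, le a b → le b a → a = b := fun a b => hle.antisymm a b
  set y0 : α := y ⟨0, hm⟩ with hy0
  have key : ∀ k : ℕ, ∀ hk : k < m, ∀ a : Fin n, y ⟨k, hk⟩ ∈ A a →
      k + 1 ≤ ((A a).filter (fun z => le y0 z)).card := by
    intro k
    induction k with
    | zero =>
      intro hk a ha
      have hmem : y ⟨0, hk⟩ ∈ (A a).filter (fun z => le y0 z) :=
        Finset.mem_filter.2 ⟨ha, hrefl _⟩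
      simpa using Finset.card_pos.2 ⟨_, hmem⟩
    | succ k ih =>
      intro hk a ha
      have hkm : k < m := Nat.lt_of_succ_lt hk
      set i : Fin m := ⟨k, hkm⟩ with hi
      set j : Fin m := ⟨k + 1, hk⟩ with hj
      have h0j : (⟨0, hm⟩ : Fin m) < j := by
        simp only [Fin.mk_lt_mk, hj]
        omega
      obtain ⟨b, hb⟩ := hreg.1 (y i)
      obtain ⟨c, hc⟩ := hreg.1 (x j)
      have hBC : Below le (A b) (A c) := hcan i j rfl b c hb hc
      have hCD : Below le (A c) (A a) := by
        rcases hreg.2.2.2.2.2.1 c a with h | h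
        · exact h
        · exfalso
          obtain ⟨z, hz, hyz⟩ := h (y j) ha
          have hxz : le (x j) z := htr _ _ _ (hlad.2.2.1 j).1 hyz
          have hx_eq : x j = z := by
            by_contra hne
            exact (hreg.2.2.1 c (x j) hc z hz hne).1 hxz
          exact (hlad.2.2.1 j).2 (hasym _ _ (hlad.2.2.1 j).1 (hx_eq ▸ hyz))
      obtain ⟨vmid, hvmid, hyv⟩ := hBC (y i) hb
      obtain ⟨g, hbijg, hmong, -⟩ :=
        stmt4_pinned le hle w A hreg _ b c (y i) vmid le_rfl hb hvmid hyv hBC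
      obtain ⟨h2, hbijh, hmonh, hpinh⟩ :=
        stmt4_pinned le hle w A hreg _ c a (x j) (y j) le_rfl hc ha
          (hlad.2.2.1 j).1 hCD
      set S : Finset α := (A b).filter (fun z => le y0 z) with hS
      have hScard : k + 1 ≤ S.card := ih hkm b hb
      set T : Finset α := (A a).filter (fun z => le y0 z) with hT
      set F : α → α := fun z => h2 (g z) with hF
      have hSsub : ∀ z ∈ S, z ∈ A b := fun z hz => (Finset.mem_filter.1 hz).1
      have hinj : Set.InjOn F ↑S := by
        intro z1 hz1 z2 hz2 hFeq
        have h1 : z1 ∈ A b := hSsub z1 hz1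
        have h2m : z2 ∈ A b := hSsub z2 hz2
        have hg12 : g z1 = g z2 :=
          hbijh.injOn (hbijg.mapsTo h1) (hbijg.mapsTo h2m) hFeq
        exact hbijg.injOn h1 h2m hg12
      have himgcard : (S.image F).card = S.card := Finset.card_image_of_injOn hinj
      have hynot : y j ∉ S.image F := by
        intro hmem
        obtain ⟨z, hzS, hFz⟩ := Finset.mem_image.1 hmem
        have hzb : z ∈ A b := hSsub z hzS
        have hgz : g z ∈ (A c : Set α) := hbijg.mapsTo hzb
        have hgx : g z = x j := by
          apply hbijh.injOn hgz (by exact_mod_cast hc)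
          rw [hpinh]; exact hFz
        have hy0z : le y0 z := (Finset.mem_filter.1 hzS).2
        have : le y0 (x j) := htr _ _ _ hy0z (hgx ▸ hmong z hzb)
        exact (hlad.2.2.2 ⟨0, hm⟩ j h0j).1 this
      have hsubT : insert (y j) (S.image F) ⊆ T := by
        intro t ht
        rcases Finset.mem_insert.1 ht with rfl | ht
        · exact Finset.mem_filter.2 ⟨ha, (hlad.2.1 ⟨0, hm⟩ j h0j).1⟩
        · obtain ⟨z, hzS, hFz⟩ := Finset.mem_image.1 ht
          have hzb : z ∈ A b := hSsub z hzS
          have hgz : g z ∈ (A c : Set α) := hbijg.mapsTo hzb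
          have htA : t ∈ (A a : Set α) := hFz ▸ hbijh.mapsTo hgz
          have hy0t : le y0 t := by
            have h1 : le y0 z := (Finset.mem_filter.1 hzS).2
            have h2' : le z (g z) := hmong z hzb
            have h3 : le (g z) (h2 (g z)) := hmonh (g z) hgz
            exact hFz ▸ htr _ _ _ h1 (htr _ _ _ h2' h3)
          exact Finset.mem_filter.2 ⟨by exact_mod_cast htA, hy0t⟩
      have hcardins : (insert (y j) (S.image F)).card = S.card + 1 := by
        rw [Finset.card_insert_of_notMem hynot, himgcard]
      have := Finset.card_le_card hsubT
      omega
  intro i a ha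
  have hset : {z : α | z ∈ A a ∧ le y0 z} =
      ↑((A a).filter (fun z => le y0 z)) := by
    ext z; simp
  rw [hset, Set.ncard_coe_finset]
  exact key i.1 i.2 a (by rw [Fin.eta]; exact ha)
end

section
/- Let (P, A_1,…,A_n) be a regular poset of width w. If a subset L ⊆ P induces a canonical m-ladder in (P, A_1,…,A_n), then m ≤ w. -/
lemma stmt5_below_of_le {α : Type} (le : α → α → Prop) {w n : ℕ} {A : Fin n → Finset α}
    (hle : IsPartialOrder α le) (hreg : IsRegularPoset le w A)
    {a b : Fin n} {u v : α} (hu : u ∈ A a) (hv : v ∈ A b) (huv : le u v) :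
    Below le (A a) (A b) := by
  obtain ⟨-, hdisj, hanti, -, -, hlin, -⟩ := hreg
  rcases hlin a b with h | h
  · exact h
  · obtain ⟨u', hu', hvu'⟩ := h v hv
    have huu' : u = u' := by
      by_contra hne
      exact (hanti a u hu u' hu' hne).1 (hle.trans _ _ _ huv hvu')
    subst huu'
    have huv' : u = v := hle.antisymm _ _ huv hvu'
    subst huv'
    have hab : a = b := by
      by_contra hab
      exact hdisj a b hab u hu hv
    subst hab
    exact h

lemma stmt5_core_edge {α : Type} (le : α → α → Prop) {w n : ℕ} {A : Fin n → Finset α}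
    (hle : IsPartialOrder α le) (hreg : IsRegularPoset le w A) :
    ∀ N : ℕ, ∀ a b : Fin n, a.val ≤ N → b.val ≤ N → Below le (A a) (A b) →
      ∀ x ∈ A a, ∀ y ∈ A b, le x y →
      ∃ f : α → α, Set.BijOn f ↑(A a) ↑(A b) ∧ (∀ v ∈ A a, le v (f v)) ∧ f x = y := by
  intro N
  induction N using Nat.strong_induction_on with
  | _ N ih =>
    intro a b haN hbN hbel x hx y hy hxy
    by_cases hab : a = b
    · subst hab
      have hxy' : x = y := by
        by_contra hne
        exact ((hreg.2.2.1 a) x hx y hy hne).1 hxy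
      subst hxy'
      exact ⟨id, Set.bijOn_id _, fun v _ => hle.refl v, rfl⟩
    · have hxny : x ≠ y := by
        rintro rfl
        exact hreg.2.1 a b hab x hx hy
      have hAne : A a ≠ A b := by
        intro h
        exact hreg.2.1 a b hab x hx (h ▸ hx)
      have hsucccore := hreg.2.2.2.2.2.2.1
      have hpredcore := hreg.2.2.2.2.2.2.2.1
      have hfac := hreg.2.2.2.2.2.2.2.2 a b x y hx hy hxy hxny
      rcases lt_trichotomy a b with hlt | heq | hgt
      · obtain ⟨k, hpred, z, hz, hxz, hzy, hzny⟩ := hfac.2 hlt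
        obtain ⟨f2, hf2bij, hf2le, hf2z⟩ := (hpredcore b k hpred).2 z hz y hy hzy
        have hbelak : Below le (A a) (A k) := hpred.2.2 a hlt ⟨hbel, hAne⟩
        have hlt' : (a : ℕ) < (b : ℕ) := hlt
        have hklt : (k : ℕ) < (b : ℕ) := hpred.1
        obtain ⟨f1, hf1bij, hf1le, hf1x⟩ :=
          ih (max a.val k.val) (by omega) a k (le_max_left _ _) (le_max_right _ _)
            hbelak x hx z hz hxz
        refine ⟨f2 ∘ f1, hf2bij.comp hf1bij, ?_, ?_⟩
        · intro v hv
          exact hle.trans _ _ _ (hf1le v hv) (hf2le _ (hf1bij.mapsTo hv))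
        · show f2 (f1 x) = y
          rw [hf1x, hf2z]
      · exact absurd heq hab
      · obtain ⟨k, hsucc, z, hz, hxz, hxnz, hzy⟩ := hfac.1 hgt
        obtain ⟨f1, hf1bij, hf1le, hf1x⟩ := (hsucccore a k hsucc).2 x hx z hz hxz
        have hbelkb : Below le (A k) (A b) := hsucc.2.2 b hgt ⟨hbel, hAne⟩
        have hgt' : (b : ℕ) < (a : ℕ) := hgt
        have hklt : (k : ℕ) < (a : ℕ) := hsucc.1
        obtain ⟨f2, hf2bij, hf2le, hf2z⟩ :=
          ih (max k.val b.val) (by omega) k b (le_max_left _ _) (le_max_right _ _)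
            hbelkb z hz y hy hzy
        refine ⟨f2 ∘ f1, hf2bij.comp hf1bij, ?_, ?_⟩
        · intro v hv
          exact hle.trans _ _ _ (hf1le v hv) (hf2le _ (hf1bij.mapsTo hv))
        · show f2 (f1 x) = y
          rw [hf1x, hf2z]

/-- A canonical `m`-ladder in a regular poset of width `w`
satisfies `m ≤ w`. -/
theorem stmt_5 {α : Type} [Fintype α] (le : α → α → Prop)
    (hle : IsPartialOrder α le) (w : ℕ) {n : ℕ} (A : Fin n → Finset α)
    (hreg : IsRegularPoset le w A) {m : ℕ}
    (x y : Fin m → α) (hlad : IsLadderIn le x y)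
    (hcan : ∀ i j : Fin m, (i : ℕ) + 1 = (j : ℕ) →
      ∀ a b : Fin n, y i ∈ A a → x j ∈ A b → Below le (A a) (A b)) :
    m ≤ w := by
  rcases Nat.eq_zero_or_pos m with hm | hm
  · omega
  obtain ⟨hchx, hchy, hrung, hinc⟩ := hlad
  choose ax hax using fun j : Fin m => hreg.1 (x j)
  choose ay hay using fun j : Fin m => hreg.1 (y j)
  have key : ∀ d i : ℕ, ∀ him : i + d + 1 = m, ∃ u : Fin m → α,
      (∀ j : Fin m, i ≤ (j : ℕ) → u j ∈ A (ax ⟨i, by omega⟩)) ∧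
      (∀ j : Fin m, i ≤ (j : ℕ) → ∀ k : Fin m, (k : ℕ) < i → ¬ le (y k) (u j)) ∧
      (∀ j j' : Fin m, i ≤ (j : ℕ) → i ≤ (j' : ℕ) → u j = u j' → j = j') := by
    intro d
    induction d with
    | zero =>
      intro i him
      refine ⟨x, ?_, ?_, ?_⟩
      · intro j hj
        have hj' : j = ⟨i, by omega⟩ := Fin.ext (by have := j.isLt; simp; omega)
        rw [hj']
        exact hax _
      · intro j hj k hk
        exact (hinc k j (Fin.lt_def.mpr (by omega))).1
      · intro j j' hj hj' _
        have := j.isLt; have := j'.isLt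
        apply Fin.ext; omega
    | succ d ihd =>
      intro i him
      obtain ⟨u, humem, huninc, huinj⟩ := ihd (i + 1) (by omega)
      set ii : Fin m := ⟨i, by omega⟩ with hii
      set ii1 : Fin m := ⟨i + 1, by omega⟩ with hii1
      have hiival : (ii : ℕ) = i := rfl
      have hii1val : (ii1 : ℕ) = i + 1 := rfl
      -- matching F : A(ax ii) → A(ay ii) with F (x ii) = y ii
      obtain ⟨f1, hf1bij, hf1le, hf1x⟩ :=
        stmt5_core_edge le hle hreg n (ax ii) (ay ii) (le_of_lt (ax ii).isLt)
          (le_of_lt (ay ii).isLt)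
          (stmt5_below_of_le le hle hreg (hax ii) (hay ii) (hrung ii).1)
          (x ii) (hax ii) (y ii) (hay ii) (hrung ii).1
      -- matching G : A(ay ii) → A(ax ii1)
      have hbelG : Below le (A (ay ii)) (A (ax ii1)) :=
        hcan ii ii1 rfl (ay ii) (ax ii1) (hay ii) (hax ii1)
      obtain ⟨t, ht, hyt⟩ := hbelG (y ii) (hay ii)
      obtain ⟨f2, hf2bij, hf2le, hf2y⟩ :=
        stmt5_core_edge le hle hreg n (ay ii) (ax ii1) (le_of_lt (ay ii).isLt)
          (le_of_lt (ax ii1).isLt) hbelG (y ii) (hay ii) t ht hyt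
      have hsurj : Set.SurjOn (f2 ∘ f1) ↑(A (ax ii)) ↑(A (ax ii1)) :=
        (hf2bij.comp hf1bij).surjOn
      have hMinj : Set.InjOn (f2 ∘ f1) ↑(A (ax ii)) := (hf2bij.comp hf1bij).injOn
      have hMle : ∀ v ∈ A (ax ii), le v ((f2 ∘ f1) v) := by
        intro v hv
        exact hle.trans _ _ _ (hf1le v hv) (hf2le _ (hf1bij.mapsTo hv))
      have hpre : ∀ j : Fin m, ∃ v, (i + 1 ≤ (j : ℕ) →
          v ∈ A (ax ii) ∧ (f2 ∘ f1) v = u j) := by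
        intro j
        by_cases hj : i + 1 ≤ (j : ℕ)
        · obtain ⟨v, hv, hMv⟩ := hsurj (humem j hj)
          exact ⟨v, fun _ => ⟨hv, hMv⟩⟩
        · exact ⟨x ii, fun h => absurd h hj⟩
      choose v hv using hpre
      refine ⟨fun j => if i + 1 ≤ (j : ℕ) then v j else x ii, ?_, ?_, ?_⟩
      · intro j hj
        by_cases h : i + 1 ≤ (j : ℕ)
        · simp only [if_pos h]
          exact (hv j h).1
        · simp only [if_neg h]
          exact hax ii
      · intro j hj k hk
        by_cases h : i + 1 ≤ (j : ℕ)
        · simp only [if_pos h]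
          intro hcon
          have h1 : le (y k) (u j) := by
            have := hMle (v j) (hv j h).1
            rw [(hv j h).2] at this
            exact hle.trans _ _ _ hcon this
          exact huninc j h k (by omega) h1
        · simp only [if_neg h]
          exact (hinc k ii (Fin.lt_def.mpr (by rw [hiival]; omega))).1
      · intro j j' hj hj' heq
        by_cases h : i + 1 ≤ (j : ℕ) <;> by_cases h' : i + 1 ≤ (j' : ℕ)
        · simp only [if_pos h, if_pos h'] at heq
          apply huinj j j' h h'
          rw [← (hv j h).2, ← (hv j' h').2, heq]
        · exfalso
          simp only [if_pos h, if_neg h'] at heq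
          have : u j = f2 (y ii) := by
            rw [← (hv j h).2, heq]
            show f2 (f1 (x ii)) = f2 (y ii)
            rw [hf1x]
          have hyuj : le (y ii) (u j) := by
            rw [this]
            exact hf2le (y ii) (hay ii)
          exact huninc j h ii (by omega) hyuj
        · exfalso
          simp only [if_neg h, if_pos h'] at heq
          have : u j' = f2 (y ii) := by
            rw [← (hv j' h').2, ← heq]
            show f2 (f1 (x ii)) = f2 (y ii)
            rw [hf1x]
          have hyuj : le (y ii) (u j') := by
            rw [this]
            exact hf2le (y ii) (hay ii)
          exact huninc j' h' ii (by omega) hyuj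
        · have := j.isLt; have := j'.isLt
          apply Fin.ext; omega
  obtain ⟨u, humem, -, huinj⟩ := key (m - 1) 0 (by omega)
  have hcard : (A (ax ⟨0, hm⟩)).card = w := hreg.2.2.2.1 (ax ⟨0, hm⟩)
  calc m = (Finset.univ : Finset (Fin m)).card := by simp
    _ ≤ (A (ax ⟨0, hm⟩)).card := by
        apply Finset.card_le_card_of_injOn u
        · intro j _
          exact humem j (by omega)
        · intro j _ j' _ hjj
          exact huinj j j' (by omega) (by omega) hjj
    _ = w := hcard
end

section
/- If (P, A_1,…,A_n) is a regular poset of width w, then P contains no induced copy of the (2w²+1)-ladder, i.e., P is L_{2w²+1}-free. -/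
section Stmt7Aux

open Classical

variable {α : Type}

/-- Bundled consequences of regularity, in the exact shapes used by the proof. -/
structure Reg7 (le : α → α → Prop) {n : ℕ} (w : ℕ) (A : Fin n → Finset α) : Prop where
  hrefl : ∀ a, le a a
  htrans : ∀ {a b c}, le a b → le b c → le a c
  hanti : ∀ {a b}, le a b → le b a → a = b
  hdisj : ∀ i j : Fin n, i ≠ j → ∀ v ∈ A i, v ∉ A j
  hac : ∀ i, IsAntichainOn le (A i)
  hcard : ∀ i, (A i).card = w
  htot : ∀ i j, Below le (A i) (A j) ∨ Below le (A j) (A i)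
  hsucc : ∀ i j, IsSuccIdx le A i j → IsCore le (A i) (A j)
  hpred : ∀ i j, IsPredIdx le A i j → IsCore le (A j) (A i)
  hr5 : ∀ (i j : Fin n) (x y : α), x ∈ A i → y ∈ A j → le x y → x ≠ y →
    (j < i → ∃ k, IsSuccIdx le A i k ∧ ∃ z ∈ A k, le x z ∧ x ≠ z ∧ le z y) ∧
    (i < j → ∃ k, IsPredIdx le A j k ∧ ∃ z ∈ A k, le x z ∧ le z y ∧ z ≠ y)
  hw : 1 ≤ w

/-- An "arc" pair of antichain indices: `A i` strictly below `A j`, and the pair is a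
succ-pair or pred-pair in the presentation (hence a core). -/
def ArcUpPair (le : α → α → Prop) {n : ℕ} (A : Fin n → Finset α) (i j : Fin n) : Prop :=
  IsSuccIdx le A i j ∨ IsPredIdx le A j i

/-- Chains of arc-edges. -/
inductive ArcReach (le : α → α → Prop) {n : ℕ} (A : Fin n → Finset α) : α → α → Prop
  | single {x y : α} {i j : Fin n} (hx : x ∈ A i) (hy : y ∈ A j) (hxy : le x y)
      (hne : x ≠ y) (harc : ArcUpPair le A i j) : ArcReach le A x y
  | cons {x y z : α} {i j : Fin n} (hx : x ∈ A i) (hy : y ∈ A j) (hxy : le x y)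
      (hne : x ≠ y) (harc : ArcUpPair le A i j) (h : ArcReach le A y z) : ArcReach le A x z


/-- Height of `r` in the strict relation `P` (longest `P`-chain ending at `r`). -/
noncomputable def shAux {m : ℕ} (P : Fin m → Fin m → Prop) (r : Fin m) : ℕ :=
  ((Finset.univ.filter (fun s => P s r ∧ s < r)).attach.sup
    (fun s => shAux P s.1)) + 1
termination_by r.1
decreasing_by
  exact (Finset.mem_filter.mp s.2).2.2

theorem shAux_pos {m : ℕ} (P : Fin m → Fin m → Prop) (r : Fin m) : 1 ≤ shAux P r := by
  rw [shAux]
  omega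

theorem shAux_lt {m : ℕ} {P : Fin m → Fin m → Prop} {s r : Fin m}
    (h : P s r) (hlt : s < r) : shAux P s < shAux P r := by
  conv_rhs => rw [shAux]
  have hmem : s ∈ Finset.univ.filter (fun s => P s r ∧ s < r) :=
    Finset.mem_filter.mpr ⟨Finset.mem_univ s, h, hlt⟩
  have := Finset.le_sup
    (f := fun t : {t // t ∈ Finset.univ.filter (fun s => P s r ∧ s < r)} => shAux P t.1)
    (Finset.mem_attach _ ⟨s, hmem⟩)
  simp only at this
  omega

theorem shAux_eq {m : ℕ} (P : Fin m → Fin m → Prop) (r : Fin m) :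
    shAux P r = ((Finset.univ.filter (fun s => P s r ∧ s < r)).attach.sup
      (fun s => shAux P s.1)) + 1 := by
  rw [shAux]

theorem shAux_attained {m : ℕ} (P : Fin m → Fin m → Prop) (r : Fin m)
    (h : 2 ≤ shAux P r) :
    ∃ s : Fin m, (P s r ∧ s < r) ∧ shAux P r = shAux P s + 1 := by
  rw [shAux_eq] at h ⊢
  set t := (Finset.univ.filter (fun s => P s r ∧ s < r)).attach with ht
  have hne : t.Nonempty := by
    by_contra hemp
    rw [Finset.not_nonempty_iff_eq_empty] at hemp
    rw [hemp] at h
    simp at h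
  obtain ⟨b, hb, hsup⟩ := Finset.exists_mem_eq_sup t hne (fun s => shAux P s.1)
  exact ⟨b.1, Finset.mem_filter.mp b.2 |>.2, by rw [hsup]⟩

namespace Reg7

variable {le : α → α → Prop} {n w : ℕ} {A : Fin n → Finset α}

theorem nonempty (hr : Reg7 le w A) (i : Fin n) : (A i).Nonempty := by
  rw [← Finset.card_pos, hr.hcard]; exact hr.hw

theorem mem_unique (hr : Reg7 le w A) {x : α} {i j : Fin n}
    (hi : x ∈ A i) (hj : x ∈ A j) : i = j := by
  by_contra h
  exact hr.hdisj i j h x hi hj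

theorem anti_eq (hr : Reg7 le w A) {x y : α} {i : Fin n}
    (hx : x ∈ A i) (hy : y ∈ A i) (hxy : le x y) : x = y := by
  by_contra h
  exact (hr.hac i x hx y hy h).1 hxy

/-- Antisymmetry of `Below` at the level of indices. -/
theorem bel_antisymm (hr : Reg7 le w A) {i j : Fin n}
    (hij : Below le (A i) (A j)) (hji : Below le (A j) (A i)) : i = j := by
  by_contra hne
  obtain ⟨a, ha⟩ := hr.nonempty i
  obtain ⟨b, hb, hab⟩ := hij a ha
  obtain ⟨a', ha', hba'⟩ := hji b hb
  have haa' : a = a' := hr.anti_eq ha ha' (hr.htrans hab hba')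
  subst haa'
  have : a = b := hr.hanti hab hba'
  subst this
  exact hr.hdisj i j hne a ha hb

theorem bel_trans (hr : Reg7 le w A) {i j k : Fin n}
    (hij : Below le (A i) (A j)) (hjk : Below le (A j) (A k)) :
    Below le (A i) (A k) := by
  intro a ha
  obtain ⟨b, hb, hab⟩ := hij a ha
  obtain ⟨c, hc, hbc⟩ := hjk b hb
  exact ⟨c, hc, hr.htrans hab hbc⟩

theorem bel_refl (hr : Reg7 le w A) (i : Fin n) : Below le (A i) (A i) :=
  fun a ha => ⟨a, ha, hr.hrefl a⟩

/-- If not below, then strictly above. -/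
theorem not_bel (hr : Reg7 le w A) {i j : Fin n} (h : ¬ Below le (A i) (A j)) :
    Below le (A j) (A i) ∧ j ≠ i := by
  rcases hr.htot i j with h' | h'
  · exact absurd h' h
  · refine ⟨h', fun he => h ?_⟩
    rw [he]; exact hr.bel_refl i

/-- Comparabilities go up in the `⊑`-order: levels. -/
theorem lvl (hr : Reg7 le w A) {x y : α} {i j : Fin n}
    (hx : x ∈ A i) (hy : y ∈ A j) (hxy : le x y) (hne : x ≠ y) :
    Below le (A i) (A j) ∧ i ≠ j := by
  have hij : i ≠ j := by
    rintro rfl; exact hne (hr.anti_eq hx hy hxy)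
  refine ⟨?_, hij⟩
  rcases hr.htot i j with h | h
  · exact h
  · exfalso
    obtain ⟨b, hb, hyb⟩ := h y hy
    have : x = b := hr.anti_eq hx hb (hr.htrans hxy hyb)
    subst this
    exact hne (hr.hanti hxy hyb)

theorem strictBelow_of (hr : Reg7 le w A) {i j : Fin n}
    (h : Below le (A i) (A j)) (hne : i ≠ j) : StrictBelow le (A i) (A j) := by
  refine ⟨h, fun he => ?_⟩
  obtain ⟨a, ha⟩ := hr.nonempty i
  exact hr.hdisj i j hne a ha (he ▸ ha)

theorem arc_strict (hr : Reg7 le w A) {i j : Fin n} (h : ArcUpPair le A i j) :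
    Below le (A i) (A j) ∧ i ≠ j := by
  rcases h with h | h
  · obtain ⟨-, ⟨hb, hne⟩, -⟩ := h
    exact ⟨hb, fun he => hne (by rw [he])⟩
  · obtain ⟨-, ⟨hb, hne⟩, -⟩ := h
    exact ⟨hb, fun he => hne (by rw [he])⟩

theorem arc_core (hr : Reg7 le w A) {i j : Fin n} (h : ArcUpPair le A i j) :
    IsCore le (A i) (A j) := by
  rcases h with h | h
  · exact hr.hsucc i j h
  · exact hr.hpred j i h

/-- Interior of an arc is presented later than both of its endpoints. -/
theorem arc_interior (hr : Reg7 le w A) {i j c : Fin n} (h : ArcUpPair le A i j)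
    (hic : Below le (A i) (A c) ∧ i ≠ c) (hcj : Below le (A c) (A j) ∧ c ≠ j) :
    i < c ∧ j < c := by
  rcases h with h | h
  · -- succ pair : j < i, minimality over k < i
    obtain ⟨hji, -, hmin⟩ := h
    have hic' : i < c := by
      rcases lt_or_ge i c with h' | h'
      · exact h'
      · exfalso
        rcases lt_or_eq_of_le h' with h'' | h''
        · have := hmin c h'' (hr.strictBelow_of hic.1 hic.2)
          exact hcj.2 (hr.bel_antisymm hcj.1 this)
        · exact hic.2 h''.symm
    exact ⟨hic', lt_trans hji hic'⟩
  · -- pred pair : IsPredIdx j i : i < j, minimality over k < j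
    obtain ⟨hij, -, hmin⟩ := h
    have hjc : j < c := by
      rcases lt_or_ge j c with h' | h'
      · exact h'
      · exfalso
        rcases lt_or_eq_of_le h' with h'' | h''
        · have := hmin c h'' (hr.strictBelow_of hcj.1 hcj.2)
          exact hic.2 (hr.bel_antisymm hic.1 this)
        · exact hcj.2 h''
    exact ⟨lt_trans hij hjc, hjc⟩

/-- Lemma G: every comparable pair extends to a dominating bijection
between its antichains. -/
theorem domBijAux (hr : Reg7 le w A) : ∀ (N : ℕ) {i j : Fin n} {x y : α},
    i.1 ⊔ j.1 < N → x ∈ A i → y ∈ A j → le x y → x ≠ y →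
    ∃ f : α → α, Set.BijOn f (A i) (A j) ∧ (∀ a ∈ A i, le a (f a)) ∧ f x = y := by
  intro N
  induction N with
  | zero => intro i j x y hN; omega
  | succ N ih =>
    intro i j x y hN hx hy hxy hne
    have hij : i ≠ j := (hr.lvl hx hy hxy hne).2
    rcases lt_or_gt_of_ne hij with hlt | hgt
    · -- i < j : use pred factorization
      obtain ⟨k, hk, z, hz, hxz, hzy, hzny⟩ := (hr.hr5 i j x y hx hy hxy hne).2 hlt
      obtain ⟨f₂, hf₂, hd₂, hf₂z⟩ := (hr.hpred j k hk).2 z hz y hy hzy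
      by_cases hxez : x = z
      · subst hxez
        have : i = k := hr.mem_unique hx hz
        subst this
        exact ⟨f₂, hf₂, hd₂, hf₂z⟩
      · have hkj : k < j := hk.1
        obtain ⟨f₁, hf₁, hd₁, hf₁x⟩ := ih (i := i) (j := k) (by omega) hx hz hxz hxez
        refine ⟨f₂ ∘ f₁, hf₂.comp hf₁, fun a ha => ?_, by simp [hf₁x, hf₂z]⟩
        exact hr.htrans (hd₁ a ha) (hd₂ (f₁ a) (hf₁.mapsTo ha))
    · -- j < i : use succ factorization
      obtain ⟨k, hk, z, hz, hxz, hxnz, hzy⟩ := (hr.hr5 i j x y hx hy hxy hne).1 hgt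
      obtain ⟨f₁, hf₁, hd₁, hf₁x⟩ := (hr.hsucc i k hk).2 x hx z hz hxz
      by_cases hzey : z = y
      · subst hzey
        have : k = j := hr.mem_unique hz hy
        subst this
        exact ⟨f₁, hf₁, hd₁, hf₁x⟩
      · have hki : k < i := hk.1
        obtain ⟨f₂, hf₂, hd₂, hf₂z⟩ := ih (i := k) (j := j) (by omega) hz hy hzy hzey
        refine ⟨f₂ ∘ f₁, hf₂.comp hf₁, fun a ha => ?_, by simp [hf₁x, hf₂z]⟩
        exact hr.htrans (hd₁ a ha) (hd₂ (f₁ a) (hf₁.mapsTo ha))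

theorem domBij (hr : Reg7 le w A) {i j : Fin n} {x y : α}
    (hx : x ∈ A i) (hy : y ∈ A j) (hxy : le x y) (hne : x ≠ y) :
    ∃ f : α → α, Set.BijOn f (A i) (A j) ∧ (∀ a ∈ A i, le a (f a)) ∧ f x = y :=
  hr.domBijAux (i.1 ⊔ j.1 + 1) (by omega) hx hy hxy hne

/-- Hall-type corollary: any `⊑`-related pair of antichains has a dominating bijection. -/
theorem hall (hr : Reg7 le w A) {i j : Fin n} (h : Below le (A i) (A j)) :
    ∃ f : α → α, Set.BijOn f (A i) (A j) ∧ (∀ a ∈ A i, le a (f a)) := by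
  by_cases hij : i = j
  · subst hij
    exact ⟨id, Set.bijOn_id _, fun a _ => hr.hrefl a⟩
  · obtain ⟨a, ha⟩ := hr.nonempty i
    obtain ⟨b, hb, hab⟩ := h a ha
    have hne : a ≠ b := by
      rintro rfl; exact hij (hr.mem_unique ha hb)
    obtain ⟨f, hf, hd, -⟩ := hr.domBij ha hb hab hne
    exact ⟨f, hf, hd⟩

/-- Concatenation of arc-chains. -/
theorem reach_trans {a b : α} (h1 : ArcReach le A a b) :
    ∀ {c : α}, ArcReach le A b c → ArcReach le A a c := by
  induction h1 with
  | single hx hy hxy hne harc => exact fun h2 => .cons hx hy hxy hne harc h2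
  | cons hx hy hxy hne harc h ihh => exact fun h2 => .cons hx hy hxy hne harc (ihh h2)

theorem reach_le (hr : Reg7 le w A) {a b : α} (h : ArcReach le A a b) : le a b := by
  induction h with
  | single _ _ hxy _ _ => exact hxy
  | cons _ _ hxy _ _ _ ihh => exact hr.htrans hxy ihh

theorem reach_ne (hr : Reg7 le w A) {a b : α} (h : ArcReach le A a b) : a ≠ b := by
  induction h with
  | single _ _ _ hne _ => exact hne
  | cons hx hy hxy hne harc h ihh =>
    rintro rfl
    exact hne (hr.hanti hxy (hr.reach_le h))

theorem reach_lvl (hr : Reg7 le w A) {a b : α} (h : ArcReach le A a b)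
    {i j : Fin n} (ha : a ∈ A i) (hb : b ∈ A j) :
    Below le (A i) (A j) ∧ i ≠ j :=
  hr.lvl ha hb (hr.reach_le h) (hr.reach_ne h)

/-- Every comparable pair is joined by a chain of arc-edges. -/
theorem reachAux (hr : Reg7 le w A) : ∀ (N : ℕ) {i j : Fin n} {x y : α},
    i.1 ⊔ j.1 < N → x ∈ A i → y ∈ A j → le x y → x ≠ y → ArcReach le A x y := by
  intro N
  induction N with
  | zero => intro i j x y hN; omega
  | succ N ih =>
    intro i j x y hN hx hy hxy hne
    have hij : i ≠ j := (hr.lvl hx hy hxy hne).2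
    rcases lt_or_gt_of_ne hij with hlt | hgt
    · -- i < j : pred factorization, last edge (z, y) on arc (k, j)
      obtain ⟨k, hk, z, hz, hxz, hzy, hzny⟩ := (hr.hr5 i j x y hx hy hxy hne).2 hlt
      have harc : ArcUpPair le A k j := Or.inr hk
      by_cases hxez : x = z
      · subst hxez
        exact .single hz hy hzy hzny harc
      · have hkj : k < j := hk.1
        have h1 : ArcReach le A x z := ih (i := i) (j := k) (by omega) hx hz hxz hxez
        exact reach_trans h1 (.single hz hy hzy hzny harc)
    · -- j < i : succ factorization, first edge (x, z) on arc (i, k)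
      obtain ⟨k, hk, z, hz, hxz, hxnz, hzy⟩ := (hr.hr5 i j x y hx hy hxy hne).1 hgt
      have harc : ArcUpPair le A i k := Or.inl hk
      by_cases hzey : z = y
      · subst hzey
        exact .single hx hz hxz hxnz harc
      · have hki : k < i := hk.1
        have h2 : ArcReach le A z y := ih (i := k) (j := j) (by omega) hz hy hzy hzey
        exact .cons hx hz hxz hxnz harc h2

theorem reach_of_le (hr : Reg7 le w A) {i j : Fin n} {x y : α}
    (hx : x ∈ A i) (hy : y ∈ A j) (hxy : le x y) (hne : x ≠ y) :
    ArcReach le A x y :=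
  hr.reachAux (i.1 ⊔ j.1 + 1) (by omega) hx hy hxy hne


/-- Laminarity: two arcs spanning a common position `τ` are nested. -/
theorem laminar (hr : Reg7 le w A) {E F E' F' τ : Fin n}
    (h1 : ArcUpPair le A E F) (h2 : ArcUpPair le A E' F')
    (hEτ : Below le (A E) (A τ)) (hτF : Below le (A τ) (A F)) (hτF1 : τ ≠ F)
    (hE'τ : Below le (A E') (A τ)) (hτF2 : Below le (A τ) (A F')) (hτF2' : τ ≠ F') :
    (Below le (A E) (A E') ∧ Below le (A F') (A F)) ∨
      (Below le (A E') (A E) ∧ Below le (A F) (A F')) := by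
  rcases hr.htot E E' with hEE' | hE'E
  · by_cases hF'F : Below le (A F') (A F)
    · exact Or.inl ⟨hEE', hF'F⟩
    · obtain ⟨hFF', hFne⟩ := hr.not_bel hF'F
      by_cases hEe : E = E'
      · subst hEe; exact Or.inr ⟨hr.bel_refl E, hFF'⟩
      · exfalso
        have hE'F : Below le (A E') (A F) := hr.bel_trans hE'τ hτF
        have hE'neF : E' ≠ F := by
          rintro rfl; exact hτF1 (hr.bel_antisymm hτF hE'τ)
        have h3 := hr.arc_interior h1 ⟨hEE', hEe⟩ ⟨hE'F, hE'neF⟩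
        have h4 := hr.arc_interior h2 ⟨hE'F, hE'neF⟩ ⟨hFF', hFne⟩
        exact lt_asymm h3.2 h4.1
  · by_cases hFF' : Below le (A F) (A F')
    · exact Or.inr ⟨hE'E, hFF'⟩
    · obtain ⟨hF'F, hF'ne⟩ := hr.not_bel hFF'
      by_cases hEe : E' = E
      · subst hEe; exact Or.inl ⟨hr.bel_refl _, hF'F⟩
      · exfalso
        have hEF' : Below le (A E) (A F') := hr.bel_trans hEτ hτF2
        have hEneF' : E ≠ F' := by
          rintro rfl; exact hτF2' (hr.bel_antisymm hτF2 hEτ)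
        have h3 := hr.arc_interior h2 ⟨hE'E, hEe⟩ ⟨hEF', hEneF'⟩
        have h4 := hr.arc_interior h1 ⟨hEF', hEneF'⟩ ⟨hF'F, hF'ne⟩
        exact lt_asymm h3.2 h4.1

/-- Every arc-chain crossing position `τ` has a (first) crossing arc-edge. -/
theorem cross (hr : Reg7 le w A) {x y : α} (h : ArcReach le A x y) :
    ∀ {i j τ : Fin n}, x ∈ A i → y ∈ A j →
      Below le (A i) (A τ) → Below le (A τ) (A j) → τ ≠ j →
      ∃ (u v : α) (iu iv : Fin n), u ∈ A iu ∧ v ∈ A iv ∧ le u v ∧ u ≠ v ∧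
        ArcUpPair le A iu iv ∧
        (x = u ∨ ArcReach le A x u) ∧ (v = y ∨ ArcReach le A v y) ∧
        Below le (A iu) (A τ) ∧ Below le (A τ) (A iv) ∧ τ ≠ iv := by
  induction h with
  | @single x y i' j' hx' hy' hxy hne harc =>
    intro i j τ hx hy hiτ hτj hτnj
    have hii : i = i' := hr.mem_unique hx hx'
    have hjj : j = j' := hr.mem_unique hy hy'
    subst hii; subst hjj
    exact ⟨x, y, i, j, hx, hy, hxy, hne, harc, Or.inl rfl, Or.inl rfl, hiτ, hτj, hτnj⟩
  | @cons x y₁ z i' j₁ hx' hy₁ hxy₁ hne₁ harc₁ htail ih =>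
    intro i j τ hx hz hiτ hτj hτnj
    have hii : i = i' := hr.mem_unique hx hx'
    subst hii
    by_cases hbel : Below le (A j₁) (A τ)
    · obtain ⟨u, v, iu, iv, h1, h2, h3, h4, h5, hpre, hsuf, h6, h7, h8⟩ :=
        ih hy₁ hz hbel hτj hτnj
      refine ⟨u, v, iu, iv, h1, h2, h3, h4, h5, Or.inr ?_, hsuf, h6, h7, h8⟩
      rcases hpre with rfl | hpre
      · exact .single hx hy₁ hxy₁ hne₁ harc₁
      · exact reach_trans (.single hx hy₁ hxy₁ hne₁ harc₁) hpre
    · obtain ⟨hτj₁, hτne⟩ := hr.not_bel hbel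
      exact ⟨x, y₁, i, j₁, hx, hy₁, hxy₁, hne₁, harc₁, Or.inl rfl, Or.inr htail,
        hiτ, hτj₁, hτne⟩

/-- Pass-through at the upper endpoint of an outer arc: a chain that starts strictly
inside the arc `(Es, Fs)` and ends at or above `Fs` passes through `A Fs`. -/
theorem passUpper (hr : Reg7 le w A) {Es Fs : Fin n} (hsarc : ArcUpPair le A Es Fs)
    {u v : α} (h : ArcReach le A u v) :
    ∀ {iu iv : Fin n}, u ∈ A iu → v ∈ A iv →
      Below le (A Es) (A iu) → Es ≠ iu →
      Below le (A iu) (A Fs) → iu ≠ Fs →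
      Below le (A Fs) (A iv) →
      ∃ z, z ∈ A Fs ∧ le u z ∧ le z v := by
  induction h with
  | @single x y i' j' hx' hy' hxy hne harc =>
    intro iu iv hx hy h1 h2 h3 h4 h5
    have hii : iu = i' := hr.mem_unique hx hx'
    have hjj : iv = j' := hr.mem_unique hy hy'
    subst hii; subst hjj
    by_cases hjF : iv = Fs
    · subst hjF; exact ⟨y, hy, hxy, hr.hrefl y⟩
    · exfalso
      have hedge := hr.arc_strict harc
      rcases hr.laminar harc hsarc (hr.bel_refl iu) hedge.1 hedge.2 h1 h3 h4 with
        hb | hb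
      · exact h2 (hr.bel_antisymm h1 hb.1)
      · exact hjF (hr.bel_antisymm hb.2 h5)
  | @cons x y₁ z i' j₁ hx' hy₁ hxy₁ hne₁ harc₁ htail ih =>
    intro iu iv hx hz h1 h2 h3 h4 h5
    have hii : iu = i' := hr.mem_unique hx hx'
    subst hii
    by_cases hjF : j₁ = Fs
    · subst hjF
      exact ⟨y₁, hy₁, hxy₁, hr.reach_le htail⟩
    · by_cases hbel : Below le (A j₁) (A Fs)
      · have hEj : Below le (A Es) (A j₁) :=
          hr.bel_trans h1 (hr.lvl hx hy₁ hxy₁ hne₁).1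
        have hEnej : Es ≠ j₁ := by
          rintro rfl
          exact h2 (hr.bel_antisymm h1 (hr.lvl hx hy₁ hxy₁ hne₁).1)
        obtain ⟨z', hz', hz'1, hz'2⟩ := ih hy₁ hz hEj hEnej hbel hjF h5
        exact ⟨z', hz', hr.htrans hxy₁ hz'1, hz'2⟩
      · exfalso
        have hedge := hr.arc_strict harc₁
        rcases hr.laminar harc₁ hsarc (hr.bel_refl iu) hedge.1 hedge.2 h1 h3 h4 with
          hb | hb
        · exact h2 (hr.bel_antisymm h1 hb.1)
        · exact hbel hb.2

/-- Pass-through at the lower endpoint of an outer arc: a chain that starts strictly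
below `Es` and ends strictly inside the arc `(Es, Fs)` passes through `A Es`. -/
theorem passLower (hr : Reg7 le w A) {Es Fs : Fin n} (hsarc : ArcUpPair le A Es Fs)
    {u v : α} (h : ArcReach le A u v) :
    ∀ {iu iv : Fin n}, u ∈ A iu → v ∈ A iv →
      Below le (A iu) (A Es) → iu ≠ Es →
      Below le (A Es) (A iv) →
      Below le (A iv) (A Fs) → iv ≠ Fs →
      ∃ z, z ∈ A Es ∧ le u z ∧ le z v := by
  induction h with
  | @single x y i' j' hx' hy' hxy hne harc =>
    intro iu iv hx hy h1 h2 h3 h4 h5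
    have hii : iu = i' := hr.mem_unique hx hx'
    have hjj : iv = j' := hr.mem_unique hy hy'
    subst hii; subst hjj
    by_cases hjE : iv = Es
    · subst hjE; exact ⟨y, hy, hxy, hr.hrefl y⟩
    · exfalso
      have hedge := hr.arc_strict harc
      have hEsne : Es ≠ iv := fun he => hjE he.symm
      have hsstrict := hr.arc_strict hsarc
      rcases hr.laminar harc hsarc h1 h3 hEsne (hr.bel_refl Es) hsstrict.1 hsstrict.2
        with hb | hb
      · exact h5 (hr.bel_antisymm h4 hb.2)
      · exact h2 (hr.bel_antisymm h1 hb.1)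
  | @cons x y₁ z i' j₁ hx' hy₁ hxy₁ hne₁ harc₁ htail ih =>
    intro iu iv hx hz h1 h2 h3 h4 h5
    have hii : iu = i' := hr.mem_unique hx hx'
    subst hii
    by_cases hjE : j₁ = Es
    · subst hjE
      exact ⟨y₁, hy₁, hxy₁, hr.reach_le htail⟩
    · by_cases hbel : Below le (A j₁) (A Es)
      · obtain ⟨z', hz', hz'1, hz'2⟩ := ih hy₁ hz hbel hjE h3 h4 h5
        exact ⟨z', hz', hr.htrans hxy₁ hz'1, hz'2⟩
      · exfalso
        obtain ⟨hEj₁, hEnej₁⟩ := hr.not_bel hbel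
        -- j₁ is strictly between Es and Fs, and the edge (x, y₁) jumps over Es
        have htl := hr.reach_lvl htail hy₁ hz
        have hj₁F : Below le (A j₁) (A Fs) := hr.bel_trans htl.1 h4
        have hj₁Fne : j₁ ≠ Fs := by
          rintro rfl
          exact h5 (hr.bel_antisymm h4 (hr.bel_trans (hr.bel_refl _) htl.1))
        rcases hr.laminar harc₁ hsarc h1 hEj₁ hEnej₁
          (hr.bel_refl Es) (hr.arc_strict hsarc).1 (hr.arc_strict hsarc).2 with hb | hb
        · exact hj₁Fne (hr.bel_antisymm hj₁F hb.2)
        · exact h2 (hr.bel_antisymm h1 hb.1)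


/-- Capacity counting: if every rung in `T` has a middle point in the single
antichain `A i0`, then `|T| ≤ w`. -/
theorem count_mid (hr : Reg7 le w A) {m : ℕ} {x y : Fin m → α}
    (hinc : ∀ r s : Fin m, r < s → ¬ le (y r) (x s) ∧ ¬ le (x s) (y r))
    (T : Finset (Fin m)) (i0 : Fin n)
    (hT : ∀ r ∈ T, ∃ z ∈ A i0, le (x r) z ∧ le z (y r)) : T.card ≤ w := by
  choose z hz1 hz2 hz3 using hT
  have hinj : Set.InjOn (fun r : {r // r ∈ T} => z r.1 r.2) ↑T.attach := by
    intro a _ b _ hab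
    simp only at hab
    by_contra hne
    have hne' : a.1 ≠ b.1 := fun h => hne (Subtype.ext h)
    rcases lt_or_gt_of_ne hne' with h | h
    · exact (hinc a.1 b.1 h).2 (hr.htrans (hz2 b.1 b.2) (hab ▸ hz3 a.1 a.2))
    · exact (hinc b.1 a.1 h).2 (hr.htrans (hz2 a.1 a.2) (hab.symm ▸ hz3 b.1 b.2))
  have hmaps : ∀ a ∈ T.attach, z a.1 a.2 ∈ A i0 := fun a _ => hz1 a.1 a.2
  have := Finset.card_le_card_of_injOn _ hmaps hinj
  rwa [Finset.card_attach, hr.hcard i0] at this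

/-- The fused spaced-chain bound: the `P`-height of every rung is at most the
size of a witness set inside one antichain. -/
theorem sh_bound (hr : Reg7 le w A) {m : ℕ} {x y : Fin m → α} {ix iy : Fin m → Fin n}
    (hmx : ∀ r, x r ∈ A (ix r)) (hmy : ∀ r, y r ∈ A (iy r))
    (hxy : ∀ r, le (x r) (y r) ∧ x r ≠ y r)
    (hinc : ∀ r s : Fin m, r < s → ¬ le (y r) (x s) ∧ ¬ le (x s) (y r)) :
    ∀ (N : ℕ) (r : Fin m), r.1 < N →
      ∃ S : Finset α, S ⊆ A (ix r) ∧
        shAux (fun a b => a < b ∧ Below le (A (iy a)) (A (ix b))) r ≤ S.card + 1 ∧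
        x r ∉ S ∧ ∀ s ∈ S, ∃ j : Fin m, j < r ∧ le (y j) s := by
  set P : Fin m → Fin m → Prop :=
    fun a b => a < b ∧ Below le (A (iy a)) (A (ix b)) with hP
  intro N
  induction N with
  | zero => intro r hN; omega
  | succ N ih =>
    intro r hN
    by_cases h2 : 2 ≤ shAux P r
    · obtain ⟨s, ⟨⟨hslt, hbel⟩, hslt'⟩, heq⟩ := shAux_attained P r h2
      obtain ⟨S, hS1, hS2, hS3, hS4⟩ := ih s (by omega)
      obtain ⟨f, hf, hfd, hfx⟩ := hr.domBij (hmx s) (hmy s) (hxy s).1 (hxy s).2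
      obtain ⟨g, hg, hgd⟩ := hr.hall hbel
      have hins : ↑(insert (x s) S) ⊆ (↑(A (ix s)) : Set α) := by
        intro a ha
        rcases Finset.mem_insert.mp ha with rfl | ha
        · exact hmx s
        · exact hS1 ha
      refine ⟨(insert (x s) S).image (g ∘ f), ?_, ?_, ?_, ?_⟩
      · intro b hb
        obtain ⟨a, ha, rfl⟩ := Finset.mem_image.mp hb
        exact hg.mapsTo (hf.mapsTo (hins ha))
      · have hinj : Set.InjOn (g ∘ f) ↑(insert (x s) S) :=
          (hg.injOn.comp hf.injOn hf.mapsTo).mono hins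
        have hcard : ((insert (x s) S).image (g ∘ f)).card = S.card + 1 := by
          rw [Finset.card_image_of_injOn hinj, Finset.card_insert_of_notMem hS3]
        omega
      · intro hmem
        obtain ⟨a, ha, heq'⟩ := Finset.mem_image.mp hmem
        simp only [Function.comp_apply] at heq'
        rcases Finset.mem_insert.mp ha with rfl | ha
        · have h1 : le (y s) (g (f (x s))) := by
            rw [hfx]; exact hgd (y s) (hmy s)
          rw [heq'] at h1
          exact (hinc s r hslt).1 h1
        · obtain ⟨j, hj, hjle⟩ := hS4 a ha
          have h1 : le (y j) (g (f a)) :=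
            hr.htrans hjle (hr.htrans (hfd a (hS1 ha))
              (hgd (f a) (hf.mapsTo (hins (Finset.mem_insert_of_mem ha)))))
          rw [heq'] at h1
          exact (hinc j r (lt_trans hj hslt)).1 h1
      · intro b hb
        obtain ⟨a, ha, heq'⟩ := Finset.mem_image.mp hb
        simp only [Function.comp_apply] at heq'
        rcases Finset.mem_insert.mp ha with rfl | ha
        · refine ⟨s, hslt, ?_⟩
          rw [← heq', hfx]; exact hgd (y s) (hmy s)
        · obtain ⟨j, hj, hjle⟩ := hS4 a ha
          refine ⟨j, lt_trans hj hslt, ?_⟩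
          rw [← heq']
          exact hr.htrans hjle (hr.htrans (hfd a (hS1 ha))
            (hgd (f a) (hf.mapsTo (hins (Finset.mem_insert_of_mem ha)))))
    · refine ⟨∅, by simp, by omega, by simp, by simp⟩

theorem sh_le_w (hr : Reg7 le w A) {m : ℕ} {x y : Fin m → α} {ix iy : Fin m → Fin n}
    (hmx : ∀ r, x r ∈ A (ix r)) (hmy : ∀ r, y r ∈ A (iy r))
    (hxy : ∀ r, le (x r) (y r) ∧ x r ≠ y r)
    (hinc : ∀ r s : Fin m, r < s → ¬ le (y r) (x s) ∧ ¬ le (x s) (y r))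
    (r : Fin m) :
    shAux (fun a b => a < b ∧ Below le (A (iy a)) (A (ix b))) r ≤ w := by
  obtain ⟨S, hS1, hS2, hS3, -⟩ := hr.sh_bound hmx hmy hxy hinc (r.1 + 1) r (by omega)
  have : (insert (x r) S).card ≤ (A (ix r)).card := by
    apply Finset.card_le_card
    intro a ha
    rcases Finset.mem_insert.mp ha with rfl | ha
    · exact hmx r
    · exact hS1 ha
  rw [Finset.card_insert_of_notMem hS3, hr.hcard] at this
  omega


/-- Laminarity, left-strict version: two arcs spanning a common position `τ`
(strictly from below) are nested. -/
theorem laminar2 (hr : Reg7 le w A) {E F E' F' τ : Fin n}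
    (h1 : ArcUpPair le A E F) (h2 : ArcUpPair le A E' F')
    (hEτ : Below le (A E) (A τ)) (hEτ1 : E ≠ τ) (hτF : Below le (A τ) (A F))
    (hE'τ : Below le (A E') (A τ)) (hE'τ1 : E' ≠ τ) (hτF' : Below le (A τ) (A F')) :
    (Below le (A E) (A E') ∧ Below le (A F') (A F)) ∨
      (Below le (A E') (A E) ∧ Below le (A F) (A F')) := by
  rcases hr.htot E E' with hEE' | hE'E
  · by_cases hF'F : Below le (A F') (A F)
    · exact Or.inl ⟨hEE', hF'F⟩
    · obtain ⟨hFF', hFne⟩ := hr.not_bel hF'F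
      by_cases hEe : E = E'
      · subst hEe; exact Or.inr ⟨hr.bel_refl E, hFF'⟩
      · exfalso
        have hE'F : Below le (A E') (A F) := hr.bel_trans hE'τ hτF
        have hE'neF : E' ≠ F := by
          rintro rfl; exact hE'τ1 (hr.bel_antisymm hE'τ hτF)
        have h3 := hr.arc_interior h1 ⟨hEE', hEe⟩ ⟨hE'F, hE'neF⟩
        have h4 := hr.arc_interior h2 ⟨hE'F, hE'neF⟩ ⟨hFF', hFne⟩
        exact lt_asymm h3.2 h4.1
  · by_cases hFF' : Below le (A F) (A F')
    · exact Or.inr ⟨hE'E, hFF'⟩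
    · obtain ⟨hF'F, hF'ne⟩ := hr.not_bel hFF'
      by_cases hEe : E' = E
      · subst hEe; exact Or.inl ⟨hr.bel_refl _, hF'F⟩
      · exfalso
        have hEF' : Below le (A E) (A F') := hr.bel_trans hEτ hτF'
        have hEneF' : E ≠ F' := by
          rintro rfl; exact hEτ1 (hr.bel_antisymm hEτ hτF')
        have h3 := hr.arc_interior h2 ⟨hE'E, hEe⟩ ⟨hEF', hEneF'⟩
        have h4 := hr.arc_interior h1 ⟨hEF', hEneF'⟩ ⟨hF'F, hF'ne⟩
        exact lt_asymm h3.2 h4.1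

/-- Left-strict crossing lemma: a chain starting strictly below `τ` and ending
at-or-above `τ` has a crossing arc-edge. -/
theorem cross2 (hr : Reg7 le w A) {x y : α} (h : ArcReach le A x y) :
    ∀ {i j τ : Fin n}, x ∈ A i → y ∈ A j →
      Below le (A i) (A τ) → i ≠ τ → Below le (A τ) (A j) →
      ∃ (u v : α) (iu iv : Fin n), u ∈ A iu ∧ v ∈ A iv ∧ le u v ∧ u ≠ v ∧
        ArcUpPair le A iu iv ∧
        (x = u ∨ ArcReach le A x u) ∧ (v = y ∨ ArcReach le A v y) ∧
        Below le (A iu) (A τ) ∧ iu ≠ τ ∧ Below le (A τ) (A iv) := by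
  induction h with
  | @single x y i' j' hx' hy' hxy hne harc =>
    intro i j τ hx hy hiτ hiτ1 hτj
    have hii : i = i' := hr.mem_unique hx hx'
    have hjj : j = j' := hr.mem_unique hy hy'
    subst hii; subst hjj
    exact ⟨x, y, i, j, hx, hy, hxy, hne, harc, Or.inl rfl, Or.inl rfl, hiτ, hiτ1, hτj⟩
  | @cons x y₁ z i' j₁ hx' hy₁ hxy₁ hne₁ harc₁ htail ih =>
    intro i j τ hx hz hiτ hiτ1 hτj
    have hii : i = i' := hr.mem_unique hx hx'
    subst hii
    by_cases hc : Below le (A j₁) (A τ) ∧ j₁ ≠ τ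
    · obtain ⟨u, v, iu, iv, h1, h2, h3, h4, h5, hpre, hsuf, h6, h7, h8⟩ :=
        ih hy₁ hz hc.1 hc.2 hτj
      refine ⟨u, v, iu, iv, h1, h2, h3, h4, h5, Or.inr ?_, hsuf, h6, h7, h8⟩
      rcases hpre with rfl | hpre
      · exact .single hx hy₁ hxy₁ hne₁ harc₁
      · exact reach_trans (.single hx hy₁ hxy₁ hne₁ harc₁) hpre
    · have hτj₁ : Below le (A τ) (A j₁) := by
        by_cases hb : Below le (A j₁) (A τ)
        · have : j₁ = τ := by
            by_contra hne'
            exact hc ⟨hb, hne'⟩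
          rw [this]; exact hr.bel_refl τ
        · exact (hr.not_bel hb).1
      exact ⟨x, y₁, i, j₁, hx, hy₁, hxy₁, hne₁, harc₁, Or.inl rfl, Or.inr htail,
        hiτ, hiτ1, hτj₁⟩

/-- A nonempty finite family of antichain indices has a `⊑`-minimal member. -/
theorem exists_bel_min (hr : Reg7 le w A) {β : Type*} (s : Finset β) (hs : s.Nonempty)
    (g : β → Fin n) : ∃ b ∈ s, ∀ b' ∈ s, Below le (A (g b)) (A (g b')) := by
  classical
  induction s using Finset.induction_on with
  | empty => simp at hs
  | @insert a s' _ ih =>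
    rcases s'.eq_empty_or_nonempty with rfl | hs'
    · refine ⟨a, by simp, ?_⟩
      intro b' hb'
      simp only [Finset.mem_insert, Finset.notMem_empty, or_false] at hb'
      subst hb'
      exact hr.bel_refl _
    · obtain ⟨b, hb, hmin⟩ := ih hs'
      rcases hr.htot (g a) (g b) with h | h
      · refine ⟨a, Finset.mem_insert_self _ _, ?_⟩
        intro b' hb'
        rcases Finset.mem_insert.mp hb' with rfl | hb'
        · exact hr.bel_refl _
        · exact hr.bel_trans h (hmin b' hb')
      · refine ⟨b, Finset.mem_insert_of_mem hb, ?_⟩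
        intro b' hb'
        rcases Finset.mem_insert.mp hb' with rfl | hb'
        · exact h
        · exact hmin b' hb'

/-- A nonempty finite family of antichain indices has a `⊑`-maximal member. -/
theorem exists_bel_max (hr : Reg7 le w A) {β : Type*} (s : Finset β) (hs : s.Nonempty)
    (g : β → Fin n) : ∃ b ∈ s, ∀ b' ∈ s, Below le (A (g b')) (A (g b)) := by
  classical
  induction s using Finset.induction_on with
  | empty => simp at hs
  | @insert a s' _ ih =>
    rcases s'.eq_empty_or_nonempty with rfl | hs'
    · refine ⟨a, by simp, ?_⟩
      intro b' hb'
      simp only [Finset.mem_insert, Finset.notMem_empty, or_false] at hb'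
      subst hb'
      exact hr.bel_refl _
    · obtain ⟨b, hb, hmax⟩ := ih hs'
      rcases hr.htot (g a) (g b) with h | h
      · refine ⟨b, Finset.mem_insert_of_mem hb, ?_⟩
        intro b' hb'
        rcases Finset.mem_insert.mp hb' with rfl | hb'
        · exact h
        · exact hmax b' hb'
      · refine ⟨a, Finset.mem_insert_self _ _, ?_⟩
        intro b' hb'
        rcases Finset.mem_insert.mp hb' with rfl | hb'
        · exact hr.bel_refl _
        · exact hr.bel_trans (hmax b' hb') h


/-- (L1): at most `2w` rungs of a ladder can pairwise overlap. -/
theorem overlap_bound (hr : Reg7 le w A) {m : ℕ} {x y : Fin m → α} {ix iy : Fin m → Fin n}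
    (hmx : ∀ r, x r ∈ A (ix r)) (hmy : ∀ r, y r ∈ A (iy r))
    (hxx : ∀ r s : Fin m, r < s → le (x r) (x s) ∧ x r ≠ x s)
    (hyy : ∀ r s : Fin m, r < s → le (y r) (y s) ∧ y r ≠ y s)
    (hxy : ∀ r, le (x r) (y r) ∧ x r ≠ y r)
    (hinc : ∀ r s : Fin m, r < s → ¬ le (y r) (x s) ∧ ¬ le (x s) (y r))
    (R : Finset (Fin m))
    (hover : ∀ r ∈ R, ∀ s ∈ R, r < s → Below le (A (ix s)) (A (iy r))) :
    R.card ≤ 2 * w := by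
  classical
  rcases R.eq_empty_or_nonempty with rfl | hne
  · simp
  have hrmaxR : R.max' hne ∈ R := R.max'_mem hne
  set rmax := R.max' hne with hrmaxdef
  set τ := ix rmax with hτdef
  set R' := R.erase rmax with hR'def
  have hspan : ∀ r ∈ R',
      Below le (A (ix r)) (A τ) ∧ ix r ≠ τ ∧ Below le (A τ) (A (iy r)) := by
    intro r hrR'
    have hrR : r ∈ R := Finset.mem_of_mem_erase hrR'
    have hlt : r < rmax :=
      lt_of_le_of_ne (R.le_max' r hrR) (Finset.ne_of_mem_erase hrR')
    have hxlv := hr.lvl (hmx r) (hmx rmax) (hxx r rmax hlt).1 (hxx r rmax hlt).2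
    exact ⟨hxlv.1, hxlv.2, hover r hrR rmax hrmaxR hlt⟩
  have hcrossdata : ∀ r : Fin m, r ∈ R' →
      ∃ (p : α × α) (q : Fin n × Fin n), p.1 ∈ A q.1 ∧ p.2 ∈ A q.2 ∧
        le p.1 p.2 ∧ p.1 ≠ p.2 ∧ ArcUpPair le A q.1 q.2 ∧
        (x r = p.1 ∨ ArcReach le A (x r) p.1) ∧
        (p.2 = y r ∨ ArcReach le A p.2 (y r)) ∧
        Below le (A q.1) (A τ) ∧ q.1 ≠ τ ∧ Below le (A τ) (A q.2) := by
    intro r hrR'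
    obtain ⟨h1, h2, h3⟩ := hspan r hrR'
    have hreach : ArcReach le A (x r) (y r) :=
      hr.reach_of_le (hmx r) (hmy r) (hxy r).1 (hxy r).2
    obtain ⟨u, v, iu, iv, c1, c2, c3, c4, c5, c6, c7, c8, c9, c10⟩ :=
      hr.cross2 hreach (hmx r) (hmy r) h1 h2 h3
    exact ⟨(u, v), (iu, iv), c1, c2, c3, c4, c5, c6, c7, c8, c9, c10⟩
  choose pt arc hm1 hm2 hle12 hne12 harcf hpre hsuf hbelτ hneτ hbelτ2 using hcrossdata
  have hprefle : ∀ (r) (h : r ∈ R'), le (x r) (pt r h).1 := by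
    intro r h
    rcases hpre r h with he | hrr
    · rw [← he]; exact hr.hrefl _
    · exact hr.reach_le hrr
  have hsufle : ∀ (r) (h : r ∈ R'), le (pt r h).2 (y r) := by
    intro r h
    rcases hsuf r h with he | hrr
    · rw [he]; exact hr.hrefl _
    · exact hr.reach_le hrr
  rcases R'.eq_empty_or_nonempty with hR'e | hR'ne
  · have : R ⊆ {rmax} := by
      intro r hrR
      rcases eq_or_ne r rmax with heq | hne'
      · rw [heq]; exact Finset.mem_singleton_self _
      · exact absurd (Finset.mem_erase.mpr ⟨hne', hrR⟩) (by rw [← hR'def, hR'e]; simp)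
    have h1 := Finset.card_le_card this
    simp only [Finset.card_singleton] at h1
    have := hr.hw
    omega
  · have hattne : R'.attach.Nonempty := Finset.attach_nonempty_iff.mpr hR'ne
    obtain ⟨t₁, -, hmin⟩ := hr.exists_bel_min R'.attach hattne (fun t => (arc t.1 t.2).1)
    set R'' := R'.attach.filter (fun t => (arc t.1 t.2).1 = (arc t₁.1 t₁.2).1) with hR''def
    have hR''ne : R''.Nonempty := ⟨t₁, Finset.mem_filter.mpr ⟨Finset.mem_attach _ _, rfl⟩⟩
    obtain ⟨tstar, htstarmem, hmax⟩ := hr.exists_bel_max R'' hR''ne (fun t => (arc t.1 t.2).2)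
    set Es := (arc tstar.1 tstar.2).1 with hEsdef
    set Fs := (arc tstar.1 tstar.2).2 with hFsdef
    have hEs_eq : Es = (arc t₁.1 t₁.2).1 := (Finset.mem_filter.mp htstarmem).2
    have hnest : ∀ t : {r // r ∈ R'}, Below le (A Es) (A (arc t.1 t.2).1) ∧
        Below le (A (arc t.1 t.2).2) (A Fs) := by
      intro t
      have hminE : Below le (A Es) (A (arc t.1 t.2).1) := by
        rw [hEs_eq]; exact hmin t (Finset.mem_attach _ _)
      refine ⟨hminE, ?_⟩
      by_cases hEeq : (arc t.1 t.2).1 = (arc t₁.1 t₁.2).1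
      · exact hmax t (Finset.mem_filter.mpr ⟨Finset.mem_attach _ _, hEeq⟩)
      · rcases hr.laminar2 (harcf t.1 t.2) (harcf tstar.1 tstar.2)
          (hbelτ t.1 t.2) (hneτ t.1 t.2) (hbelτ2 t.1 t.2)
          (hbelτ tstar.1 tstar.2) (hneτ tstar.1 tstar.2) (hbelτ2 tstar.1 tstar.2)
          with hb | hb
        · exact absurd (hEs_eq ▸ hr.bel_antisymm hb.1 hminE) hEeq
        · exact hb.2
    -- level of x r* is at or below Es
    have hixEs : Below le (A (ix tstar.1)) (A Es) := by
      rcases hpre tstar.1 tstar.2 with he | hrr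
      · have : x tstar.1 ∈ A Es := by rw [he]; exact hm1 tstar.1 tstar.2
        have h2 := hr.mem_unique (hmx tstar.1) this
        rw [← h2]; exact hr.bel_refl _
      · exact (hr.reach_lvl hrr (hmx tstar.1) (hm1 tstar.1 tstar.2)).1
    -- level of y r* is at or above Fs
    have hFsiy : Below le (A Fs) (A (iy tstar.1)) := by
      rcases hsuf tstar.1 tstar.2 with he | hrr
      · have : y tstar.1 ∈ A Fs := by rw [← he]; exact hm2 tstar.1 tstar.2
        have h2 := hr.mem_unique this (hmy tstar.1)
        rw [← h2]; exact hr.bel_refl _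
      · exact (hr.reach_lvl hrr (hm2 tstar.1 tstar.2) (hmy tstar.1)).1
    -- bucket 1 : rungs before (or equal) r* have a witness in A Es
    have hbucket1 : ∀ r ∈ R', r ≤ tstar.1 → ∃ z ∈ A Es, le (x r) z ∧ le z (y r) := by
      intro r hrR' hrle
      rcases eq_or_lt_of_le hrle with heq | hlt
      · subst heq
        exact ⟨(pt _ hrR').1, hm1 _ hrR', hprefle _ hrR',
          hr.htrans (hle12 _ hrR') (hsufle _ hrR')⟩
      · have hxlv := hr.lvl (hmx r) (hmx tstar.1) (hxx r tstar.1 hlt).1 (hxx r tstar.1 hlt).2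
        have hIx : Below le (A (ix r)) (A Es) := hr.bel_trans hxlv.1 hixEs
        have hIxne : ix r ≠ Es := by
          intro he
          exact hxlv.2 (hr.bel_antisymm hxlv.1 (by rw [he]; exact hixEs))
        have huF : Below le (A (arc r hrR').1) (A Fs) :=
          hr.bel_trans (hbelτ r hrR') (hbelτ2 tstar.1 tstar.2)
        have huFne : (arc r hrR').1 ≠ Fs := by
          intro he
          apply hneτ r hrR'
          refine hr.bel_antisymm (hbelτ r hrR') ?_
          rw [he]
          exact hbelτ2 tstar.1 tstar.2
        rcases hpre r hrR' with he | hreachpre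
        · exfalso
          apply hIxne
          have : x r ∈ A ((arc r hrR').1) := by rw [he]; exact hm1 r hrR'
          have h2 := hr.mem_unique (hmx r) this
          have h3 : Below le (A Es) (A (ix r)) := by
            rw [h2]; exact (hnest ⟨r, hrR'⟩).1
          exact hr.bel_antisymm hIx h3
        · obtain ⟨z, hz, hz1, hz2⟩ := hr.passLower (harcf tstar.1 tstar.2) hreachpre
            (hmx r) (hm1 r hrR') hIx hIxne (hnest ⟨r, hrR'⟩).1 huF huFne
          exact ⟨z, hz, hz1,
            hr.htrans hz2 (hr.htrans (hle12 r hrR') (hsufle r hrR'))⟩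
    -- bucket 2 : rungs after (or equal) r* have a witness in A Fs
    have hbucket2 : ∀ r ∈ R', tstar.1 ≤ r → ∃ z ∈ A Fs, le (x r) z ∧ le z (y r) := by
      intro r hrR' hrle
      rcases eq_or_lt_of_le hrle with heq | hlt
      · subst heq
        exact ⟨(pt _ hrR').2, hm2 _ hrR',
          hr.htrans (hprefle _ hrR') (hle12 _ hrR'), hsufle _ hrR'⟩
      · by_cases hvF : (arc r hrR').2 = Fs
        · exact ⟨(pt r hrR').2, by rw [← hvF]; exact hm2 r hrR',
            hr.htrans (hprefle r hrR') (hle12 r hrR'), hsufle r hrR'⟩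
        · have hEsv : Below le (A Es) (A ((arc r hrR').2)) :=
            hr.bel_trans (hnest ⟨r, hrR'⟩).1
              (hr.bel_trans (hbelτ r hrR') (hbelτ2 r hrR'))
          have hEsvne : Es ≠ (arc r hrR').2 := by
            intro he
            apply hneτ r hrR'
            refine hr.bel_antisymm (hbelτ r hrR') ?_
            have hτEs : Below le (A τ) (A ((arc r hrR').2)) := hbelτ2 r hrR'
            rw [← he] at hτEs
            exact hr.bel_trans hτEs (hnest ⟨r, hrR'⟩).1
          have hylv := hr.lvl (hmy tstar.1) (hmy r) (hyy tstar.1 r hlt).1 (hyy tstar.1 r hlt).2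
          have hFsiyr : Below le (A Fs) (A (iy r)) := hr.bel_trans hFsiy hylv.1
          rcases hsuf r hrR' with he | hsufr
          · exfalso
            have : y r ∈ A ((arc r hrR').2) := by rw [← he]; exact hm2 r hrR'
            have h2 := hr.mem_unique this (hmy r)
            apply hvF
            refine hr.bel_antisymm (hnest ⟨r, hrR'⟩).2 ?_
            rw [← h2] at hFsiyr
            exact hFsiyr
          · obtain ⟨z, hz, hz1, hz2⟩ := hr.passUpper (harcf tstar.1 tstar.2) hsufr
              (hm2 r hrR') (hmy r) hEsv hEsvne (hnest ⟨r, hrR'⟩).2 hvF hFsiyr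
            exact ⟨z, hz,
              hr.htrans (hr.htrans (hprefle r hrR') (hle12 r hrR')) hz1, hz2⟩
    -- counting
    set T1 := R'.filter (fun r => r ≤ tstar.1) with hT1def
    set T2 := R'.filter (fun r => tstar.1 ≤ r) with hT2def
    have hc1 : T1.card ≤ w := by
      apply hr.count_mid hinc T1 Es
      intro r hrT
      have h' := Finset.mem_filter.mp hrT
      exact hbucket1 r h'.1 h'.2
    have hc2 : T2.card ≤ w := by
      apply hr.count_mid hinc T2 Fs
      intro r hrT
      have h' := Finset.mem_filter.mp hrT
      exact hbucket2 r h'.1 h'.2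
    have hunion : R' = T1 ∪ T2 := by
      ext r
      simp only [hT1def, hT2def, Finset.mem_union, Finset.mem_filter]
      constructor
      · intro hrR'
        rcases le_total r tstar.1 with h | h
        · exact Or.inl ⟨hrR', h⟩
        · exact Or.inr ⟨hrR', h⟩
      · rintro (⟨h, -⟩ | ⟨h, -⟩) <;> exact h
    have hinter : tstar.1 ∈ T1 ∩ T2 := by
      rw [Finset.mem_inter, hT1def, hT2def]
      exact ⟨Finset.mem_filter.mpr ⟨tstar.2, le_refl _⟩,
        Finset.mem_filter.mpr ⟨tstar.2, le_refl _⟩⟩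
    have hcui := Finset.card_union_add_card_inter T1 T2
    have hT12 : 1 ≤ (T1 ∩ T2).card := Finset.card_pos.mpr ⟨tstar.1, hinter⟩
    have hRc : R'.card + 1 = R.card := Finset.card_erase_add_one hrmaxR
    rw [← hunion] at hcui
    omega

end Reg7
end Stmt7Aux
/-- A regular poset of width `w` contains no induced copy of the
`(2w²+1)`-ladder. -/

theorem stmt_7 {α : Type} [Fintype α] (le : α → α → Prop)
    (hle : IsPartialOrder α le) (w : ℕ) {n : ℕ} (A : Fin n → Finset α)
    (hreg : IsRegularPoset le w A) :
    LFree le (2 * w ^ 2 + 1) := by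
  classical
  rintro ⟨x, y, hxx, hyy, hxy, hinc⟩
  obtain ⟨hcov, hdisj, hac, hcard, hwidth, htot, hsuccC, hpredC, hr5⟩ := hreg
  haveI := hle
  have hrefl : ∀ a, le a a := fun a => refl_of le a
  have htrans : ∀ {a b c}, le a b → le b c → le a c := fun hab hbc => trans_of le hab hbc
  have hanti : ∀ {a b}, le a b → le b a → a = b := fun hab hba => antisymm_of le hab hba
  have hm0 : (0 : ℕ) < 2 * w ^ 2 + 1 := by omega
  have hw : 1 ≤ w := by
    by_contra hw0
    obtain ⟨i, hi⟩ := hcov (x ⟨0, hm0⟩)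
    have hci := hcard i
    have : w = 0 := by omega
    rw [this, Finset.card_eq_zero] at hci
    rw [hci] at hi
    simp at hi
  have hr : Reg7 le w A :=
    { hrefl := hrefl, htrans := fun hab hbc => htrans hab hbc,
      hanti := fun hab hba => hanti hab hba,
      hdisj := hdisj, hac := hac, hcard := hcard, htot := htot,
      hsucc := hsuccC, hpred := hpredC, hr5 := hr5, hw := hw }
  choose ixf hixf using fun r : Fin (2 * w ^ 2 + 1) => hcov (x r)
  choose iyf hiyf using fun r : Fin (2 * w ^ 2 + 1) => hcov (y r)
  set P : Fin (2 * w ^ 2 + 1) → Fin (2 * w ^ 2 + 1) → Prop :=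
    fun a b => a < b ∧ Below le (A (iyf a)) (A (ixf b)) with hPdef
  have hshle : ∀ r, shAux P r ≤ w := fun r =>
    hr.sh_le_w hixf hiyf hxy hinc r
  have hshpos : ∀ r, 1 ≤ shAux P r := fun r => shAux_pos P r
  have hmaps : ∀ r ∈ (Finset.univ : Finset (Fin (2 * w ^ 2 + 1))),
      shAux P r - 1 ∈ Finset.range w := by
    intro r _
    rw [Finset.mem_range]
    have h1 := hshle r
    have h2 := hshpos r
    omega
  have hcount : (Finset.range w).card * (2 * w) <
      (Finset.univ : Finset (Fin (2 * w ^ 2 + 1))).card := by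
    rw [Finset.card_range, Finset.card_univ, Fintype.card_fin]
    ring_nf
    omega
  obtain ⟨v, -, hfiber⟩ :=
    Finset.exists_lt_card_fiber_of_mul_lt_card_of_maps_to hmaps hcount
  set Y := Finset.univ.filter (fun r => shAux P r - 1 = v) with hYdef
  have hoverlap : ∀ r ∈ Y, ∀ s ∈ Y, r < s → Below le (A (ixf s)) (A (iyf r)) := by
    intro r hrY s hsY hrs
    by_contra hnb
    have hb := (hr.not_bel hnb).1
    have hlt := shAux_lt (P := P) ⟨hrs, hb⟩ hrs
    have hr1 := (Finset.mem_filter.mp hrY).2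
    have hs1 := (Finset.mem_filter.mp hsY).2
    have hp1 := hshpos r
    have hp2 := hshpos s
    omega
  have hYle := hr.overlap_bound hixf hiyf hxx hyy hxy hinc Y hoverlap
  omega
end

section
/- Let P be a finite poset with an n-Grundy coloring g, let x_1,…,x_k be an ascending chain of P, and let y_1,…,y_{k−1} be elements such that y_i is a g(x_i)-witness of x_{i+1} for each i ∈ [k−1]. Then (C1) x_i <_P y_i for each i ∈ [k−1], and (C2) y_i ≯_P x_j for all 1 ≤ i < j ≤ k. (Dually, for a descending chain x_1,…,x_k with such witnesses, x_i >_P y_i and y_i ≮_P x_j for i < j.) -/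
/-- For an ascending chain `x_1,…,x_{k+1}` with `y_i` a
`g(x_i)`-witness of `x_{i+1}`: (C1) `x_i < y_i`, and (C2) `¬(x_j < y_i)` for
`i < j`; dually for descending chains. -/
theorem stmt_9 {α : Type} [Fintype α] (le : α → α → Prop)
    (hle : IsPartialOrder α le) (N : ℕ) (g : α → ℕ) (hg : IsGrundy le N g)
    (k : ℕ) (x : Fin (k + 1) → α) (y : Fin k → α)
    (hwit : ∀ i : Fin k, (¬ le (y i) (x i.succ) ∧ ¬ le (x i.succ) (y i)) ∧
      g (y i) = g (x i.castSucc)) :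
    (IsAscending le g x →
      (∀ i : Fin k, le (x i.castSucc) (y i) ∧ x i.castSucc ≠ y i) ∧
      (∀ (i : Fin k) (j : Fin (k + 1)), (i : ℕ) < (j : ℕ) →
        ¬ (le (x j) (y i) ∧ x j ≠ y i))) ∧
    (IsDescending le g x →
      (∀ i : Fin k, le (y i) (x i.castSucc) ∧ x i.castSucc ≠ y i) ∧
      (∀ (i : Fin k) (j : Fin (k + 1)), (i : ℕ) < (j : ℕ) →
        ¬ (le (y i) (x j) ∧ y i ≠ x j))) := by
  have hrefl := hle.refl
  have htrans := hle.trans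
  have hcomp := hg.2.2.1
  constructor
  · intro hasc
    have hsucc : ∀ i : Fin k, le (x i.castSucc) (x i.succ) := by
      intro i
      exact ((hasc i.castSucc i.succ (by simp [Fin.lt_def])).1).1
    have hC1 : ∀ i : Fin k, le (x i.castSucc) (y i) ∧ x i.castSucc ≠ y i := by
      intro i
      obtain ⟨⟨h1, h2⟩, hgy⟩ := hwit i
      have hne : x i.castSucc ≠ y i := by
        intro h
        exact h1 (h ▸ hsucc i)
      rcases hcomp (y i) (x i.castSucc) hgy with h | h
      · exact absurd (htrans _ _ _ h (hsucc i)) h1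
      · exact ⟨h, hne⟩
    refine ⟨hC1, ?_⟩
    intro i j hij ⟨hxy, _⟩
    obtain ⟨⟨h1, h2⟩, _⟩ := hwit i
    have hle2 : le (x i.succ) (x j) := by
      rcases eq_or_lt_of_le (Nat.succ_le_of_lt hij) with h | h
      · have : i.succ = j := Fin.ext (by simpa using h)
        exact this ▸ hrefl _
      · exact ((hasc i.succ j (by simpa [Fin.lt_def] using h)).1).1
    exact h2 (htrans _ _ _ hle2 hxy)
  · intro hdesc
    have hsucc : ∀ i : Fin k, le (x i.succ) (x i.castSucc) := by
      intro i
      exact ((hdesc i.castSucc i.succ (by simp [Fin.lt_def])).1).1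
    have hC1 : ∀ i : Fin k, le (y i) (x i.castSucc) ∧ x i.castSucc ≠ y i := by
      intro i
      obtain ⟨⟨h1, h2⟩, hgy⟩ := hwit i
      have hne : x i.castSucc ≠ y i := by
        intro h
        exact h2 (h ▸ hsucc i)
      rcases hcomp (y i) (x i.castSucc) hgy with h | h
      · exact ⟨h, hne⟩
      · exact absurd (htrans _ _ _ (hsucc i) h) h2
    refine ⟨hC1, ?_⟩
    intro i j hij ⟨hxy, _⟩
    obtain ⟨⟨h1, h2⟩, _⟩ := hwit i
    have hle2 : le (x j) (x i.succ) := by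
      rcases eq_or_lt_of_le (Nat.succ_le_of_lt hij) with h | h
      · have : i.succ = j := Fin.ext (by simpa using h)
        exact this ▸ hrefl _
      · exact ((hdesc i.succ j (by simpa [Fin.lt_def] using h)).1).1
    exact h1 (htrans _ _ _ hxy hle2)
end

section
/- Let P and Q be finite posets such that P admits an s-Grundy coloring and Q admits an n-Grundy coloring. Then the lexicographic product P·Q admits an (s·n)-Grundy coloring; explicitly, if f is an s-Grundy coloring of P and g an n-Grundy coloring of Q, then h((p,q)) = (f(p)−1)·n + g(q) is an (s·n)-Grundy coloring of P·Q. -/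
/-- Auxiliary: uniqueness of the mixed-radix decomposition. -/
lemma grundy_key (n c1 b1 c2 b2 : ℕ) (hb1 : 1 ≤ b1) (hb1' : b1 ≤ n)
    (hb2 : 1 ≤ b2) (hb2' : b2 ≤ n) (h : c1 * n + b1 = c2 * n + b2) :
    c1 = c2 ∧ b1 = b2 := by
  have key : ∀ x y u v : ℕ, 1 ≤ u → u ≤ n → 1 ≤ v → v ≤ n →
      x * n + u = y * n + v → ¬ x < y := by
    intro x y u v hu hu' hv hv' heq hlt
    have h2 : x * n + n ≤ y * n := by
      calc x * n + n = (x + 1) * n := by ring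
        _ ≤ y * n := Nat.mul_le_mul_right n hlt
    omega
  have h1 : ¬ c1 < c2 := key c1 c2 b1 b2 hb1 hb1' hb2 hb2' h
  have h2 : ¬ c2 < c1 := key c2 c1 b2 b1 hb2 hb2' hb1 hb1' h.symm
  have hc : c1 = c2 := by omega
  subst hc
  exact ⟨rfl, by omega⟩

/-- if `f` is an `s`-Grundy coloring of `P` and `g` an
`n`-Grundy coloring of `Q`, then `h(p,q) = (f p − 1)·n + g q` is an
`(s·n)`-Grundy coloring of the lexicographic product `P·Q`. -/
theorem stmt_16 {α β : Type} [Fintype α] [Fintype β]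
    (leP : α → α → Prop) (leQ : β → β → Prop)
    (hP : IsPartialOrder α leP) (hQ : IsPartialOrder β leQ)
    (s n : ℕ) (f : α → ℕ) (g : β → ℕ)
    (hf : IsGrundy leP s f) (hg : IsGrundy leQ n g) :
    IsGrundy (LexLe leP leQ) (s * n)
      (fun pq => (f pq.1 - 1) * n + g pq.2) := by
  obtain ⟨hf1, hf2, hf3, hf4⟩ := hf
  obtain ⟨hg1, hg2, hg3, hg4⟩ := hg
  refine ⟨?_, ?_, ?_, ?_⟩
  · intro v
    have h1 := hf1 v.1
    have h2 := hg1 v.2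
    have hs : 1 ≤ s := le_trans h1.1 h1.2
    refine ⟨le_trans h2.1 (Nat.le_add_left _ _), ?_⟩
    show (f v.1 - 1) * n + g v.2 ≤ s * n
    have hmul : (f v.1 - 1) * n ≤ (s - 1) * n := Nat.mul_le_mul_right n (by omega)
    have he : (s - 1) * n + n = s * n := by
      have h' : s - 1 + 1 = s := by omega
      calc (s - 1) * n + n = (s - 1 + 1) * n := by ring
        _ = s * n := by rw [h']
    linarith [h2.2]
  · intro i hi1 hi2
    have hn : 1 ≤ n := by
      by_contra h
      have h0 : n = 0 := by omega
      rw [h0, Nat.mul_zero] at hi2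
      omega
    obtain ⟨d, b, hm, hblt⟩ : ∃ d b, d * n + b = i - 1 ∧ b < n :=
      ⟨(i - 1) / n, (i - 1) % n, by rw [Nat.mul_comm]; exact Nat.div_add_mod _ _,
        Nat.mod_lt _ (by omega)⟩
    have him : i - 1 + 1 = i := by omega
    have hds : d + 1 ≤ s := by
      by_contra h
      have hle : s * n ≤ d * n := Nat.mul_le_mul_right n (by omega)
      linarith
    obtain ⟨p, hp⟩ := hf2 (d + 1) (by omega) hds
    obtain ⟨q, hq⟩ := hg2 (b + 1) (by omega) (by omega)
    refine ⟨(p, q), ?_⟩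
    simp only [hp, hq, Nat.add_sub_cancel]
    linarith
  · intro u v huv
    simp only [] at huv
    have h2 := hg1 u.2
    have h4 := hg1 v.2
    obtain ⟨hc, hbq⟩ := grundy_key n (f u.1 - 1) (g u.2) (f v.1 - 1) (g v.2)
      h2.1 h2.2 h4.1 h4.2 huv
    have h1 := hf1 u.1
    have h3 := hf1 v.1
    have hfe : f u.1 = f v.1 := by omega
    by_cases hp : u.1 = v.1
    · rcases hg3 u.2 v.2 hbq with h | h
      · exact Or.inl (Or.inr ⟨hp, h⟩)
      · exact Or.inr (Or.inr ⟨hp.symm, h⟩)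
    · rcases hf3 u.1 v.1 hfe with h | h
      · exact Or.inl (Or.inl ⟨h, hp⟩)
      · exact Or.inr (Or.inl ⟨h, fun e => hp e.symm⟩)
  · intro v i hi1 hi2
    simp only [] at hi2 ⊢
    have h1 := hf1 v.1
    have h2 := hg1 v.2
    have hn : 1 ≤ n := le_trans h2.1 h2.2
    obtain ⟨d, b, hm, hblt⟩ : ∃ d b, d * n + b = i - 1 ∧ b < n :=
      ⟨(i - 1) / n, (i - 1) % n, by rw [Nat.mul_comm]; exact Nat.div_add_mod _ _,
        Nat.mod_lt _ (by omega)⟩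
    have him : i - 1 + 1 = i := by omega
    have he : (f v.1 - 1) * n + n = f v.1 * n := by
      have h' : f v.1 - 1 + 1 = f v.1 := by omega
      calc (f v.1 - 1) * n + n = (f v.1 - 1 + 1) * n := by ring
        _ = f v.1 * n := by rw [h']
    have hdf : d + 1 ≤ f v.1 := by
      by_contra h
      have hle : f v.1 * n ≤ d * n := Nat.mul_le_mul_right n (by omega)
      linarith [h2.2]
    by_cases hcase : d + 1 < f v.1
    · obtain ⟨p, hpinc, hpf⟩ := hf4 v.1 (d + 1) (by omega) hcase
      obtain ⟨q, hq⟩ := hg2 (b + 1) (by omega) (by omega)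
      have hne : p ≠ v.1 := fun e => hpinc.1 (e ▸ hP.refl p)
      refine ⟨(p, q), ⟨?_, ?_⟩, ?_⟩
      · rintro (⟨hl, -⟩ | ⟨hl, -⟩)
        · exact hpinc.1 hl
        · exact hne hl
      · rintro (⟨hl, -⟩ | ⟨hl, -⟩)
        · exact hpinc.2 hl
        · exact hne hl.symm
      · simp only [hpf, hq, Nat.add_sub_cancel]
        linarith
    · have hfd : f v.1 = d + 1 := by omega
      have hbg : b + 1 < g v.2 := by
        rw [hfd] at hi2
        simp only [Nat.add_sub_cancel] at hi2
        linarith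
      obtain ⟨q, hqinc, hqg⟩ := hg4 v.2 (b + 1) (by omega) hbg
      have hne : q ≠ v.2 := fun e => hqinc.1 (e ▸ hQ.refl q)
      refine ⟨(v.1, q), ⟨?_, ?_⟩, ?_⟩
      · rintro (⟨-, hl⟩ | ⟨-, hl⟩)
        · exact hl rfl
        · exact hqinc.1 hl
      · rintro (⟨-, hl⟩ | ⟨-, hl⟩)
        · exact hl rfl
        · exact hqinc.2 hl
      · simp only [hqg, hfd, Nat.add_sub_cancel]
        linarith
end

section
/- Let m ≥ 2 and let P and Q be finite L_m-free posets such that Q has a least element and a greatest element. Then the lexicographic product P·Q is L_m-free. -/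
/-- for `m ≥ 2`, the lexicographic product of two finite
`L_m`-free posets, the second having a least and a greatest element, is
`L_m`-free. -/
theorem stmt_17 {α β : Type} [Fintype α] [Fintype β]
    (leP : α → α → Prop) (leQ : β → β → Prop)
    (hP : IsPartialOrder α leP) (hQ : IsPartialOrder β leQ)
    (m : ℕ) (hm : 2 ≤ m) (hPfree : LFree leP m) (hQfree : LFree leQ m)
    (b0 b1 : β) (hbot : ∀ b, leQ b0 b) (htop : ∀ b, leQ b b1) :
    LFree (LexLe leP leQ) m := by
    classical
  rintro ⟨x, y, hx, hy, hxy, hinc⟩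
  have hrefl : ∀ z, leP z z := fun z => hP.refl z
  set p : Fin m → α := fun i => (x i).1 with hpdef
  set q : Fin m → β := fun i => (x i).2 with hqdef
  set r : Fin m → α := fun i => (y i).1 with hrdef
  set s : Fin m → β := fun i => (y i).2 with hsdef
  have hpp : ∀ i j : Fin m, i ≤ j → leP (p i) (p j) := by
    intro i j hij
    rcases eq_or_lt_of_le hij with h | h
    · subst h; exact hrefl _
    · rcases (hx i j h).1 with ⟨h1, _⟩ | ⟨h1, _⟩
      · exact h1
      · rw [show p i = p j from h1]; exact hrefl _
  have hrr : ∀ i j : Fin m, i ≤ j → leP (r i) (r j) := by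
    intro i j hij
    rcases eq_or_lt_of_le hij with h | h
    · subst h; exact hrefl _
    · rcases (hy i j h).1 with ⟨h1, _⟩ | ⟨h1, _⟩
      · exact h1
      · rw [show r i = r j from h1]; exact hrefl _
  have hpr : ∀ i : Fin m, leP (p i) (r i) := by
    intro i
    rcases (hxy i).1 with ⟨h1, _⟩ | ⟨h1, _⟩
    · exact h1
    · rw [show p i = r i from h1]; exact hrefl _
  have hF1 : ∀ i j : Fin m, i < j → r i ≠ p j →
      ¬ leP (r i) (p j) ∧ ¬ leP (p j) (r i) := by
    intro i j hij hne
    obtain ⟨h1, h2⟩ := hinc i j hij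
    exact ⟨fun h => h1 (Or.inl ⟨h, hne⟩),
           fun h => h2 (Or.inl ⟨h, fun e => hne e.symm⟩)⟩
  have hQfib : ∀ i j : Fin m, i < j → r i = p j →
      ¬ leQ (s i) (q j) ∧ ¬ leQ (q j) (s i) := by
    intro i j hij he
    obtain ⟨h1, h2⟩ := hinc i j hij
    exact ⟨fun h => h1 (Or.inr ⟨he, h⟩), fun h => h2 (Or.inr ⟨he.symm, h⟩)⟩
  by_cases hbad : ∃ i j : Fin m, i ≤ j ∧ r i = p j
  · obtain ⟨i0, j0, hij0, ha⟩ := hbad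
    set a := p j0 with hadef
    have hcompr : ∀ k : Fin m, leP (r k) a ∨ leP a (r k) := by
      intro k
      rcases le_total k i0 with h | h
      · left; rw [← ha]; exact hrr k i0 h
      · right; rw [← ha]; exact hrr i0 k h
    have hcompp : ∀ k : Fin m, leP (p k) a ∨ leP a (p k) := by
      intro k
      rcases le_total k j0 with h | h
      · left; exact hpp k j0 h
      · right; exact hpp j0 k h
    have hrlt : ∀ k : Fin m, k < j0 → r k = a := by
      intro k hk
      by_contra hne
      obtain ⟨h1, h2⟩ := hF1 k j0 hk hne
      rcases hcompr k with h | h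
      · exact h1 h
      · exact h2 h
    have hpgt : ∀ k : Fin m, i0 < k → p k = a := by
      intro k hk
      by_contra hne
      obtain ⟨h1, h2⟩ := hF1 i0 k hk (by rw [ha]; exact fun e => hne e.symm)
      rw [ha] at h1 h2
      rcases hcompp k with h | h
      · exact h2 h
      · exact h1 h
    have hrk : ∀ k : Fin m, (k : ℕ) + 1 < m → r k = a := by
      intro k hk
      rcases lt_or_ge k j0 with h | h
      · exact hrlt k h
      · by_contra hne
        set k' : Fin m := ⟨(k : ℕ) + 1, hk⟩ with hk'def
        have hkk' : k < k' := by
          simp only [Fin.lt_def, hk'def]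
          omega
        have hpk' : p k' = a := hpgt k' (lt_of_le_of_lt (le_trans hij0 h) hkk')
        obtain ⟨h1, h2⟩ := hF1 k k' hkk' (by rw [hpk']; exact hne)
        rw [hpk'] at h2
        exact h2 (by rw [← ha]; exact hrr i0 k (le_trans hij0 h))
    have hpk : ∀ k : Fin m, 0 < (k : ℕ) → p k = a := by
      intro k hk
      rcases lt_or_ge i0 k with h | h
      · exact hpgt k h
      · by_contra hne
        have hk1 : (k : ℕ) - 1 < m := by omega
        set k' : Fin m := ⟨(k : ℕ) - 1, hk1⟩ with hk'def
        have hkk' : k' < k := by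
          simp only [Fin.lt_def, hk'def]
          omega
        have hrk' : r k' = a := hrlt k' (lt_of_lt_of_le hkk' (le_trans h hij0))
        obtain ⟨h1, h2⟩ := hF1 k' k hkk' (by rw [hrk']; exact fun e => hne e.symm)
        rw [hrk'] at h2
        exact h2 (hpp k j0 (le_trans h hij0))
    have hqq : ∀ i j : Fin m, i < j → p i = a → p j = a →
        leQ (q i) (q j) ∧ q i ≠ q j := by
      intro i j hij h1 h2
      obtain ⟨hle, hne⟩ := hx i j hij
      rcases hle with ⟨_, hne'⟩ | ⟨_, hle'⟩
      · exact absurd (h1.trans h2.symm) hne'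
      · exact ⟨hle', fun e => hne (Prod.ext (h1.trans h2.symm) e)⟩
    have hss : ∀ i j : Fin m, i < j → r i = a → r j = a →
        leQ (s i) (s j) ∧ s i ≠ s j := by
      intro i j hij h1 h2
      obtain ⟨hle, hne⟩ := hy i j hij
      rcases hle with ⟨_, hne'⟩ | ⟨_, hle'⟩
      · exact absurd (h1.trans h2.symm) hne'
      · exact ⟨hle', fun e => hne (Prod.ext (h1.trans h2.symm) e)⟩
    have hqs : ∀ i : Fin m, p i = a → r i = a → leQ (q i) (s i) ∧ q i ≠ s i := by
      intro i h1 h2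
      obtain ⟨hle, hne⟩ := hxy i
      rcases hle with ⟨_, hne'⟩ | ⟨_, hle'⟩
      · exact absurd (h1.trans h2.symm) hne'
      · exact ⟨hle', fun e => hne (Prod.ext (h1.trans h2.symm) e)⟩
    apply hQfree
    refine ⟨fun k => if p k = a then q k else b0,
            fun k => if r k = a then s k else b1, ?_, ?_, ?_, ?_⟩
    · intro i j hij
      have hijv : (i : ℕ) < (j : ℕ) := hij
      have hpj : p j = a := hpk j (by omega)
      dsimp only
      by_cases hpi : p i = a
      · rw [if_pos hpi, if_pos hpj]
        exact hqq i j hij hpi hpj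
      · rw [if_neg hpi, if_pos hpj]
        have hjm : (j : ℕ) < m := j.isLt
        have hri : r i = a := hrk i (by omega)
        obtain ⟨_, h2⟩ := hQfib i j hij (hri.trans hpj.symm)
        exact ⟨hbot _, fun e => h2 (by rw [← e]; exact hbot _)⟩
    · intro i j hij
      have hijv : (i : ℕ) < (j : ℕ) := hij
      have hjm : (j : ℕ) < m := j.isLt
      have hri : r i = a := hrk i (by omega)
      dsimp only
      by_cases hrj : r j = a
      · rw [if_pos hri, if_pos hrj]
        exact hss i j hij hri hrj
      · rw [if_pos hri, if_neg hrj]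
        have hpj : p j = a := hpk j (by omega)
        obtain ⟨_, h2⟩ := hQfib i j hij (hri.trans hpj.symm)
        exact ⟨htop _, fun e => h2 (by rw [e]; exact htop _)⟩
    · intro i
      have him : (i : ℕ) < m := i.isLt
      dsimp only
      by_cases hpi : p i = a <;> by_cases hri : r i = a
      · rw [if_pos hpi, if_pos hri]
        exact hqs i hpi hri
      · rw [if_pos hpi, if_neg hri]
        have him1 : (i : ℕ) + 1 = m := by
          by_contra h
          exact hri (hrk i (by omega))
        set i' : Fin m := ⟨(i : ℕ) - 1, by omega⟩ with hi'def
        have hi'i : i' < i := by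
          simp only [Fin.lt_def, hi'def]
          omega
        have hri' : r i' = a := hrk i' (by simp only [hi'def]; omega)
        obtain ⟨h1, _⟩ := hQfib i' i hi'i (hri'.trans hpi.symm)
        exact ⟨htop _, fun e => h1 (by rw [e]; exact htop _)⟩
      · rw [if_neg hpi, if_pos hri]
        have hi0 : (i : ℕ) = 0 := by
          by_contra h
          exact hpi (hpk i (by omega))
        set j' : Fin m := ⟨1, by omega⟩ with hj'def
        have hij' : i < j' := by
          simp only [Fin.lt_def, hj'def]
          omega
        have hpj' : p j' = a := hpk j' (by simp only [hj'def]; omega)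
        obtain ⟨h1, _⟩ := hQfib i j' hij' (hri.trans hpj'.symm)
        exact ⟨hbot _, fun e => h1 (by rw [← e]; exact hbot _)⟩
      · exfalso
        have hi0 : (i : ℕ) = 0 := by
          by_contra h
          exact hpi (hpk i (by omega))
        have him1 : (i : ℕ) + 1 = m := by
          by_contra h
          exact hri (hrk i (by omega))
        omega
    · intro i j hij
      have hijv : (i : ℕ) < (j : ℕ) := hij
      have hjm : (j : ℕ) < m := j.isLt
      have hri : r i = a := hrk i (by omega)
      have hpj : p j = a := hpk j (by omega)
      dsimp only
      rw [if_pos hri, if_pos hpj]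
      exact hQfib i j hij (hri.trans hpj.symm)
  · push_neg at hbad
    apply hPfree
    refine ⟨p, r, ?_, ?_, ?_, ?_⟩
    · intro i j hij
      refine ⟨hpp i j hij.le, fun e => ?_⟩
      have h2 := (hF1 i j hij (hbad i j hij.le)).2
      exact h2 (by rw [← e]; exact hpr i)
    · intro i j hij
      refine ⟨hrr i j hij.le, fun e => ?_⟩
      have h2 := (hF1 i j hij (hbad i j hij.le)).2
      exact h2 (by rw [e]; exact hpr j)
    · intro i
      exact ⟨hpr i, fun e => hbad i i le_rfl e.symm⟩
    · intro i j hij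
      exact hF1 i j hij (hbad i j hij.le)
end
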